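/- arXiv:math/0009249 — 5 statements merged into one kernel-verified Lean document; each statement's English description precedes it below -/
import Mathlib

section
/- If a locally compact group H acts freely and properly on a locally compact Hausdorff space P, then the translation function tr : P ×_{H\P} P → H, characterised by q = tr(q,p)•p for all pairs (q,p) with H•q = H•p, is well-defined and continuous. -/
/-- If a locally compact group `H` acts freely and properly on a locally
compact Hausdorff space `P`, then the translation function
`tr : P ×_{H\P} P → H`, characterised by `q = tr(q,p) • p` whenever `H•q = H•p`,
is well-defined (exists, and is unique by freeness) and continuous. -/
theorem statement1
    (H P : Type*) [Group H] [TopologicalSpace H] [IsTopologicalGroup H]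
    [LocallyCompactSpace H] [TopologicalSpace P] [T2Space P] [LocallyCompactSpace P]
    [MulAction H P] [ContinuousSMul H P]
    (hfree : ∀ (s : H) (p : P), s • p = p → s = 1)
    (hproper : IsProperMap (fun sp : H × P => (sp.1 • sp.2, sp.2))) :
    ∃ tr : {qp : P × P // MulAction.orbit H qp.1 = MulAction.orbit H qp.2} → H,
      Continuous tr ∧
      (∀ qp, tr qp • qp.val.2 = qp.val.1) ∧
      (∀ qp (s : H), s • qp.val.2 = qp.val.1 → s = tr qp) := by
  classical
  set S := {qp : P × P // MulAction.orbit H qp.1 = MulAction.orbit H qp.2} with hS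
  have hmem : ∀ sp : H × P,
      MulAction.orbit H (sp.1 • sp.2) = MulAction.orbit H sp.2 :=
    fun sp => MulAction.orbit_smul sp.1 sp.2
  let g : H × P → S := fun sp => ⟨(sp.1 • sp.2, sp.2), hmem sp⟩
  have hgcont : Continuous g := Continuous.subtype_mk hproper.continuous _
  have hginj : Function.Injective g := by
    intro a b h
    have hv := congrArg Subtype.val h
    have h1 : a.1 • a.2 = b.1 • b.2 := (Prod.ext_iff.mp hv).1
    have h2 : a.2 = b.2 := (Prod.ext_iff.mp hv).2
    have hfix : (b.1⁻¹ * a.1) • a.2 = a.2 := by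
      rw [mul_smul, h1, ← h2, inv_smul_smul]
    have := hfree _ _ hfix
    have hst : a.1 = b.1 := (inv_mul_eq_one.mp this).symm
    exact Prod.ext hst h2
  have hgsurj : Function.Surjective g := by
    rintro ⟨⟨q, p⟩, h⟩
    have hq : q ∈ MulAction.orbit H p := h ▸ MulAction.mem_orbit_self q
    obtain ⟨s, hs⟩ := hq
    exact ⟨(s, p), Subtype.ext (Prod.ext hs rfl)⟩
  have hgclosed : IsClosedMap g := by
    intro C hC
    have h1 : IsClosed ((fun sp : H × P => (sp.1 • sp.2, sp.2)) '' C) :=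
      hproper.isClosedMap C hC
    have himg : g '' C =
        Subtype.val ⁻¹' ((fun sp : H × P => (sp.1 • sp.2, sp.2)) '' C) := by
      ext x
      constructor
      · rintro ⟨sp, hsp, rfl⟩
        exact ⟨sp, hsp, rfl⟩
      · rintro ⟨sp, hsp, hx⟩
        exact ⟨sp, hsp, Subtype.ext hx⟩
    rw [himg]
    exact h1.preimage continuous_subtype_val
  let e := Equiv.ofBijective g ⟨hginj, hgsurj⟩
  have hesymm : Continuous e.symm := by
    rw [continuous_iff_isClosed]
    intro C hC
    have hpre : e.symm ⁻¹' C = g '' C := by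
      ext x
      constructor
      · intro hx
        exact ⟨e.symm x, hx, e.apply_symm_apply x⟩
      · rintro ⟨c, hc, rfl⟩
        show e.symm (e c) ∈ C
        rw [e.symm_apply_apply]; exact hc
    rw [hpre]
    exact hgclosed C hC
  have hchar : ∀ qp : S, (e.symm qp).1 • qp.val.2 = qp.val.1 := by
    intro qp
    have h := e.apply_symm_apply qp
    have h1 := congrArg Subtype.val h
    have h2 : (e.symm qp).2 = qp.val.2 := congrArg Prod.snd h1
    have h3 : (e.symm qp).1 • (e.symm qp).2 = qp.val.1 := congrArg Prod.fst h1
    rw [← h2]; exact h3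
  refine ⟨fun qp => (e.symm qp).1, continuous_fst.comp hesymm, hchar, ?_⟩
  intro qp s hs
  have h2 : ((e.symm qp).1⁻¹ * s) • qp.val.2 = qp.val.2 := by
    rw [mul_smul, hs, ← hchar qp, inv_smul_smul]
  have := hfree _ _ h2
  have := congrArg ((e.symm qp).1 * ·) this
  simpa [mul_assoc] using this
end

section
/- With H acting on the left of P commuting with the right K-action, and commuting strongly continuous actions τ : H → Aut(C), σ : K → Aut(C), the formula ((lt⊗τ)_s f)(p) = τ_s(f(s⁻¹•p)) defines a strongly continuous action of H by *-automorphisms on the induced C*-algebra Ind(C,σ). -/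
open BoundedContinuousFunction

/-- With `H` acting on the left of `P` commuting with the right `K`-action,
and commuting strongly continuous actions `τ`, `σ` of `H`, `K` on the C*-algebra `C`,
the formula `((lt⊗τ)_s f)(p) = τ_s (f (s⁻¹•p))` defines a strongly continuous action of
`H` by *-automorphisms on the induced C*-algebra `Ind(C,σ) ⊆ C_b(P,C)`. -/
theorem statement5
    (H K P : Type*) [Group H] [TopologicalSpace H] [IsTopologicalGroup H]
    [LocallyCompactSpace H] [Group K] [TopologicalSpace K] [IsTopologicalGroup K]
    [LocallyCompactSpace K] [TopologicalSpace P] [T2Space P] [LocallyCompactSpace P]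
    [MulAction H P] [ContinuousSMul H P]
    -- a continuous right action of K on P, commuting with the H-action
    (act : P → K → P) (hact1 : ∀ p, act p 1 = p)
    (hactmul : ∀ p t t', act (act p t) t' = act p (t * t'))
    (hactcont : Continuous fun x : P × K => act x.1 x.2)
    (hcomm : ∀ (s : H) (p : P) (t : K), act (s • p) t = s • act p t)
    -- the orbit space P/K with its quotient map
    (Q : Type*) [TopologicalSpace Q] (πQ : P → Q) (hπQ : Topology.IsQuotientMap πQ)
    (hπQfib : ∀ p p', πQ p = πQ p' ↔ ∃ t, act p t = p')
    -- a C*-algebra C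
    (C : Type*) [NonUnitalNormedRing C] [StarRing C] [CStarRing C] [NormedSpace ℂ C]
    [IsScalarTower ℂ C C] [SMulCommClass ℂ C C] [StarModule ℂ C] [CompleteSpace C]
    [NormedStarGroup C]
    -- commuting strongly continuous actions τ of H and σ of K on C
    (τ : H → C ≃⋆ₐ[ℂ] C) (hτ1 : ∀ c, τ 1 c = c)
    (hτmul : ∀ s s' c, τ (s * s') c = τ s (τ s' c))
    (hτcont : ∀ c, Continuous fun s => τ s c)
    (σ : K → C ≃⋆ₐ[ℂ] C) (hσ1 : ∀ c, σ 1 c = c)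
    (hσmul : ∀ t t' c, σ (t * t') c = σ t (σ t' c))
    (hσcont : ∀ c, Continuous fun t => σ t c)
    (hτσ : ∀ s t c, τ s (σ t c) = σ t (τ s c)) :
    ∃ T : H → (P →ᵇ C) → (P →ᵇ C),
      -- the defining formula
      (∀ s f p, T s f p = τ s (f (s⁻¹ • p))) ∧
      -- T s preserves Ind(C,σ)
      (∀ s, Set.MapsTo (T s)
        {f : P →ᵇ C | (∀ p t, f (act p t) = (σ t).symm (f p)) ∧
          (∀ ε > (0:ℝ), IsCompact {x : Q | ∃ p, πQ p = x ∧ ε ≤ ‖f p‖})}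
        {f : P →ᵇ C | (∀ p t, f (act p t) = (σ t).symm (f p)) ∧
          (∀ ε > (0:ℝ), IsCompact {x : Q | ∃ p, πQ p = x ∧ ε ≤ ‖f p‖})}) ∧
      -- T is an action of the group H
      (∀ f, T 1 f = f) ∧ (∀ s s' f, T (s * s') f = T s (T s' f)) ∧
      -- each T s is a *-automorphism (on all of C_b(P,C), hence on Ind(C,σ))
      (∀ s f g, T s (f + g) = T s f + T s g) ∧
      (∀ s (c : ℂ) f, T s (c • f) = c • T s f) ∧
      (∀ s f g, T s (f * g) = T s f * T s g) ∧
      (∀ s f, T s (star f) = star (T s f)) ∧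
      -- strong continuity on Ind(C,σ)
      (∀ f : P →ᵇ C,
        ((∀ p t, f (act p t) = (σ t).symm (f p)) ∧
          (∀ ε > (0:ℝ), IsCompact {x : Q | ∃ p, πQ p = x ∧ ε ≤ ‖f p‖})) →
        Continuous fun s => T s f) := by

  letI : NonUnitalCStarAlgebra C := {}
  have hτnorm : ∀ (s : H) (c : C), ‖τ s c‖ = ‖c‖ := fun s c => StarAlgEquiv.norm_map (τ s) c
  have hσsymmnorm : ∀ (t : K) (c : C), ‖(σ t).symm c‖ = ‖c‖ :=
    fun t c => StarAlgEquiv.norm_map (σ t).symm c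
  have hτσsymm : ∀ s t c, τ s ((σ t).symm c) = (σ t).symm (τ s c) := by
    intro s t c
    have h := hτσ s t ((σ t).symm c)
    rw [(σ t).apply_symm_apply] at h
    rw [h, (σ t).symm_apply_apply]
  have hcont : ∀ (s : H) (f : P →ᵇ C), Continuous fun p => τ s (f (s⁻¹ • p)) := by
    intro s f
    exact (StarAlgEquiv.isometry (τ s)).continuous.comp
      (f.continuous.comp (continuous_const_smul s⁻¹))
  refine ⟨fun s f => BoundedContinuousFunction.ofNormedAddCommGroup
      (fun p => τ s (f (s⁻¹ • p))) (hcont s f) ‖f‖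
      (fun p => by rw [hτnorm]; exact f.norm_coe_le_norm _), fun s f p => rfl,
      ?_, ?_, ?_, ?_, ?_, ?_, ?_, ?_⟩
  · -- MapsTo
    rintro s f ⟨hf1, hf2⟩
    constructor
    · intro p t
      show τ s (f (s⁻¹ • act p t)) = (σ t).symm (τ s (f (s⁻¹ • p)))
      rw [← hcomm, hf1, hτσsymm]
    · intro ε hε
      have hwd : ∀ p p', πQ p = πQ p' → πQ (s • p) = πQ (s • p') := by
        intro p p' h
        obtain ⟨t, ht⟩ := (hπQfib p p').mp h
        exact (hπQfib _ _).mpr ⟨t, by rw [hcomm, ht]⟩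
      choose sec hsec using hπQ.surjective
      set φ : Q → Q := fun x => πQ (s • sec x) with hφ
      have hφπ : ∀ p, φ (πQ p) = πQ (s • p) := fun p => hwd _ _ (hsec (πQ p))
      have hφc : Continuous φ := by
        rw [hπQ.continuous_iff]
        have h2 : φ ∘ πQ = fun p => πQ (s • p) := funext hφπ
        rw [h2]
        exact hπQ.continuous.comp (continuous_const_smul s)
      have hset : {x : Q | ∃ p, πQ p = x ∧ ε ≤ ‖τ s (f (s⁻¹ • p))‖}
          = φ '' {x : Q | ∃ p, πQ p = x ∧ ε ≤ ‖f p‖} := by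
        ext x
        constructor
        · rintro ⟨p, hpx, hpε⟩
          rw [hτnorm] at hpε
          exact ⟨πQ (s⁻¹ • p), ⟨s⁻¹ • p, rfl, hpε⟩, by rw [hφπ, smul_inv_smul, hpx]⟩
        · rintro ⟨x', ⟨q, hqx, hqε⟩, hx⟩
          refine ⟨s • q, by rw [← hx, ← hqx, hφπ], ?_⟩
          rw [inv_smul_smul, hτnorm]
          exact hqε
      show IsCompact {x : Q | ∃ p, πQ p = x ∧ ε ≤ ‖τ s (f (s⁻¹ • p))‖}
      rw [hset]
      exact (hf2 ε hε).image hφc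
  · -- T 1 = id
    intro f
    ext p
    show τ 1 (f ((1:H)⁻¹ • p)) = f p
    rw [hτ1, inv_one, one_smul]
  · -- multiplicativity of the action
    intro s s' f
    ext p
    show τ (s * s') (f ((s * s')⁻¹ • p)) = τ s (τ s' (f (s'⁻¹ • s⁻¹ • p)))
    rw [hτmul, mul_inv_rev, ← smul_smul]
  · intro s f g
    ext p
    show τ s ((f + g) (s⁻¹ • p)) = τ s (f (s⁻¹ • p)) + τ s (g (s⁻¹ • p))
    rw [BoundedContinuousFunction.add_apply, map_add]
  · intro s c f
    ext p
    show τ s ((c • f) (s⁻¹ • p)) = c • τ s (f (s⁻¹ • p))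
    rw [BoundedContinuousFunction.smul_apply, map_smul]
  · intro s f g
    ext p
    show τ s ((f * g) (s⁻¹ • p)) = τ s (f (s⁻¹ • p)) * τ s (g (s⁻¹ • p))
    rw [BoundedContinuousFunction.mul_apply, map_mul]
  · intro s f
    ext p
    show τ s ((star f) (s⁻¹ • p)) = star (τ s (f (s⁻¹ • p)))
    rw [BoundedContinuousFunction.star_apply, map_star]
  · -- strong continuity
    rintro f ⟨hf1, hf2⟩
    rw [continuous_iff_continuousAt]
    intro s₀
    rw [ContinuousAt, Metric.tendsto_nhds]
    intro ε hε
    set δ := ε / 5 with hδ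
    have hδ0 : 0 < δ := by positivity
    -- πQ is an open map
    have hπopen : IsOpenMap πQ := by
      intro U hU
      rw [← hπQ.isOpen_preimage]
      have : πQ ⁻¹' (πQ '' U) = ⋃ t : K, (fun p => act p t) ⁻¹' U := by
        ext p
        simp only [Set.mem_preimage, Set.mem_image, Set.mem_iUnion]
        constructor
        · rintro ⟨q, hqU, hq⟩
          obtain ⟨t, ht⟩ := (hπQfib q p).mp hq
          refine ⟨t⁻¹, ?_⟩
          rwa [← ht, hactmul, mul_inv_cancel, hact1]
        · rintro ⟨t, ht⟩
          exact ⟨act p t, ht, (hπQfib _ _).mpr ⟨t⁻¹, by rw [hactmul, mul_inv_cancel, hact1]⟩⟩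
      rw [this]
      exact isOpen_iUnion fun t => hU.preimage (hactcont.comp (Continuous.prodMk_left t))
    -- a compact M ⊆ P covering the support region
    obtain ⟨M, hMc, hMprop⟩ : ∃ M : Set P, IsCompact M ∧
        ∀ q : P, δ ≤ ‖f q‖ → ∃ m ∈ M, ∃ t, act m t = q := by
      choose N hNc hNn using fun p : P => exists_compact_mem_nhds p
      have hsub : {x : Q | ∃ p, πQ p = x ∧ δ ≤ ‖f p‖} ⊆ ⋃ p : P, πQ '' interior (N p) := by
        rintro x ⟨p, hp, -⟩
        exact Set.mem_iUnion.mpr ⟨p, ⟨p, mem_interior_iff_mem_nhds.mpr (hNn p), hp⟩⟩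
      obtain ⟨F, hF⟩ := (hf2 δ hδ0).elim_finite_subcover (fun p => πQ '' interior (N p))
        (fun p => hπopen _ isOpen_interior) hsub
      refine ⟨⋃ p ∈ F, N p, F.isCompact_biUnion (fun p _ => hNc p), ?_⟩
      intro q hq
      have hqL : πQ q ∈ {x : Q | ∃ p, πQ p = x ∧ δ ≤ ‖f p‖} := ⟨q, rfl, hq⟩
      obtain ⟨p, hpF, m, hm, hmq⟩ := by simpa using hF hqL
      obtain ⟨t, ht⟩ := (hπQfib m q).mp hmq
      exact ⟨m, Set.mem_biUnion hpF (interior_subset hm), t, ht⟩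
    -- joint continuity of (s, c) ↦ τ s c
    have hjoint : Continuous fun z : H × C => τ z.1 z.2 := by
      rw [continuous_iff_continuousAt]
      rintro ⟨s₁, c₁⟩
      have h1 : Filter.Tendsto (fun z : H × C => τ z.1 (z.2 - c₁)) (nhds (s₁, c₁)) (nhds 0) := by
        refine squeeze_zero_norm (fun z : H × C => le_of_eq (hτnorm z.1 (z.2 - c₁))) ?_
        have hcn : Continuous fun z : H × C => ‖z.2 - c₁‖ :=
          (continuous_snd.sub continuous_const).norm
        simpa using hcn.tendsto (s₁, c₁)
      have h2 : Filter.Tendsto (fun z : H × C => τ z.1 c₁) (nhds (s₁, c₁)) (nhds (τ s₁ c₁)) :=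
        ((hτcont c₁).tendsto s₁).comp (continuous_fst.tendsto (s₁, c₁))
      have h3 := h1.add h2
      rw [zero_add] at h3
      refine h3.congr fun z => ?_
      rw [map_sub, sub_add_cancel]
    -- uniform smallness of τ s - τ s₀ on the compact set f '' M
    have hA : ∀ᶠ s in nhds s₀, ∀ c ∈ f '' M, ‖τ s c - τ s₀ c‖ < δ := by
      apply (hMc.image f.continuous).eventually_forall_of_forall_eventually
      intro c hc
      have hco : Continuous fun z : H × C => ‖τ z.1 z.2 - τ s₀ z.2‖ :=
        (hjoint.sub (hjoint.comp (continuous_const.prodMk continuous_snd))).norm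
      exact (hco.continuousAt (x := (s₀, c))).eventually_lt continuousAt_const
        (by simpa using hδ0)
    -- uniform smallness of f (u • m) - f m for u near 1, m ∈ M
    have hB : ∀ᶠ u in nhds (1 : H), ∀ m ∈ M, ‖f (u • m) - f m‖ < δ := by
      apply hMc.eventually_forall_of_forall_eventually
      intro m hm
      have hco : Continuous fun z : H × P => ‖f (z.1 • z.2) - f z.2‖ :=
        ((f.continuous.comp continuous_smul).sub (f.continuous.comp continuous_snd)).norm
      exact (hco.continuousAt (x := ((1:H), m))).eventually_lt continuousAt_const
        (by simpa using hδ0)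
    have htend1 : Filter.Tendsto (fun s : H => s⁻¹ * s₀) (nhds s₀) (nhds 1) := by
      have hc : Continuous fun s : H => s⁻¹ * s₀ := continuous_inv.mul continuous_const
      simpa using hc.tendsto s₀
    have htend2 : Filter.Tendsto (fun s : H => s₀⁻¹ * s) (nhds s₀) (nhds 1) := by
      have hc : Continuous fun s : H => s₀⁻¹ * s := continuous_const.mul continuous_id
      simpa using hc.tendsto s₀
    filter_upwards [htend1.eventually hB, htend2.eventually hB, hA] with s hu1 hu2 hsA
    set u := s⁻¹ * s₀ with hu
    have huinv : u⁻¹ = s₀⁻¹ * s := by rw [hu, mul_inv_rev, inv_inv]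
    -- pointwise estimates
    have key1 : ∀ q, ‖f (u • q) - f q‖ ≤ 2 * δ := by
      intro q
      by_cases h1 : δ ≤ ‖f q‖
      · obtain ⟨m, hm, t, ht⟩ := hMprop q h1
        have e1 : f (u • q) = (σ t).symm (f (u • m)) := by rw [← ht, ← hcomm, hf1]
        have e2 : f q = (σ t).symm (f m) := by rw [← ht, hf1]
        calc ‖f (u • q) - f q‖ = ‖(σ t).symm (f (u • m) - f m)‖ := by rw [e1, e2, map_sub]
          _ = ‖f (u • m) - f m‖ := hσsymmnorm t _
          _ ≤ 2 * δ := le_of_lt (lt_of_lt_of_le (hu1 m hm) (by linarith))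
      · by_cases h2 : δ ≤ ‖f (u • q)‖
        · obtain ⟨m, hm, t, ht⟩ := hMprop _ h2
          have hq : q = act (u⁻¹ • m) t := by rw [hcomm, ht, inv_smul_smul]
          have e1 : f (u • q) = (σ t).symm (f m) := by rw [← ht, hf1]
          have e2 : f q = (σ t).symm (f (u⁻¹ • m)) := by rw [hq, hf1]
          calc ‖f (u • q) - f q‖ = ‖(σ t).symm (f m - f (u⁻¹ • m))‖ := by
                rw [e1, e2, map_sub]
            _ = ‖f m - f (u⁻¹ • m)‖ := hσsymmnorm t _
            _ = ‖f (u⁻¹ • m) - f m‖ := norm_sub_rev _ _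
            _ ≤ 2 * δ := by
                have := hu2 m hm
                rw [← huinv] at this
                linarith
        · push_neg at h1 h2
          calc ‖f (u • q) - f q‖ ≤ ‖f (u • q)‖ + ‖f q‖ := norm_sub_le _ _
            _ ≤ 2 * δ := by linarith
    have key2 : ∀ q, ‖τ s (f q) - τ s₀ (f q)‖ ≤ 2 * δ := by
      intro q
      by_cases h1 : δ ≤ ‖f q‖
      · obtain ⟨m, hm, t, ht⟩ := hMprop q h1
        have e2 : f q = (σ t).symm (f m) := by rw [← ht, hf1]
        rw [e2, hτσsymm, hτσsymm, ← map_sub, hσsymmnorm]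
        exact le_of_lt (lt_of_lt_of_le (hsA (f m) ⟨m, hm, rfl⟩) (by linarith))
      · push_neg at h1
        calc ‖τ s (f q) - τ s₀ (f q)‖ ≤ ‖τ s (f q)‖ + ‖τ s₀ (f q)‖ := norm_sub_le _ _
          _ = ‖f q‖ + ‖f q‖ := by rw [hτnorm, hτnorm]
          _ ≤ 2 * δ := by linarith
    have hd : ∀ p : P, ‖τ s (f (s⁻¹ • p)) - τ s₀ (f (s₀⁻¹ • p))‖ ≤ 4 * δ := by
      intro p
      set q := s₀⁻¹ • p with hq
      have hus : s⁻¹ • p = u • q := by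
        rw [hq, hu, smul_smul, mul_assoc, mul_inv_cancel, mul_one]
      calc ‖τ s (f (s⁻¹ • p)) - τ s₀ (f q)‖
          ≤ ‖τ s (f (s⁻¹ • p)) - τ s (f q)‖ + ‖τ s (f q) - τ s₀ (f q)‖ := by
            exact norm_sub_le_norm_sub_add_norm_sub _ _ _
        _ ≤ 2 * δ + 2 * δ := by
            refine add_le_add ?_ (key2 q)
            rw [← map_sub, hτnorm, hus]
            exact key1 q
        _ = 4 * δ := by ring
    refine lt_of_le_of_lt ?_ (show 4 * δ < ε by rw [hδ]; linarith)
    rw [BoundedContinuousFunction.dist_le (by linarith)]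
    intro p
    rw [dist_eq_norm]
    exact hd p
end

section
/- Let H be a locally compact group acting on a locally compact Hausdorff space P, let C be a C*-algebra with a continuous H-action τ, and suppose v : H × P → C is continuous with compact support contained in M × N (M ⊆ H, N ⊆ P compact). If K acts properly on the right of P, then for the B-valued inner product ⟨v(s,·), v(s,·)⟩_B(t,p) = v(s,p)* σ_t(v(s,p·t)) Δ_K(t)^{-1/2}, one has the norm estimate ∫_H ‖⟨v(s,·),v(s,·)⟩_B‖ ds ≤ μ_H(M) · ‖v‖_∞² · ∫_{{t ∈ K : N ∩ N·t⁻¹ ≠ ∅}} Δ_K(t)^{-1/2} dt, and the integration domain {t ∈ K : N ∩ N·t⁻¹ ≠ ∅} is compact (hence the bound is finite). -/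
open MeasureTheory

/-- the `L¹`-norm estimate
`∫_H ‖⟨v(s,·),v(s,·)⟩_B‖ ds ≤ μ_H(M)·‖v‖_∞²·∫_{t : N ∩ N·t⁻¹ ≠ ∅} Δ_K(t)^{-1/2} dt`
for a continuous `v : H × P → C` supported in `M × N`, where the `B`-valued inner
product is `⟨v(s,·),v(s,·)⟩_B(t,p) = Δ_K(t)^{-1/2} v(s,p)* σ_t(v(s,p·t))` and the
C*-norm `Nb` on `C_c(K × P, C)` is dominated by the `L¹`-norm; moreover the
integration domain `{t ∈ K : N ∩ N·t⁻¹ ≠ ∅}` is compact. -/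
theorem statement7
    (H K P : Type*) [Group H] [TopologicalSpace H] [IsTopologicalGroup H]
    [LocallyCompactSpace H] [MeasurableSpace H] [BorelSpace H]
    [Group K] [TopologicalSpace K] [IsTopologicalGroup K] [LocallyCompactSpace K]
    [MeasurableSpace K] [BorelSpace K]
    [TopologicalSpace P] [T2Space P] [LocallyCompactSpace P]
    (μH : Measure H) [μH.IsHaarMeasure] (μK : Measure K) [μK.IsHaarMeasure]
    -- modular function of K
    (Δ : K → ℝ) (hΔpos : ∀ t, 0 < Δ t) (hΔ1 : Δ 1 = 1)
    (hΔmul : ∀ t t', Δ (t * t') = Δ t * Δ t') (hΔcont : Continuous Δ)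
    (hΔ : ∀ t : K, Measure.map (fun u => u * t) μK = (ENNReal.ofReal (Δ t))⁻¹ • μK)
    -- a proper continuous right action of K on P
    (act : P → K → P) (hact1 : ∀ p, act p 1 = p)
    (hactmul : ∀ p t t', act (act p t) t' = act p (t * t'))
    (hactcont : Continuous fun x : P × K => act x.1 x.2)
    (hproperK : IsProperMap (fun x : P × K => (act x.1 x.2, x.1)))
    -- a C*-algebra C with an action of K by isometric *-automorphisms
    (C : Type*) [NonUnitalNormedRing C] [StarRing C] [CStarRing C] [NormedSpace ℂ C]
    [NormedSpace ℝ C] [IsScalarTower ℂ C C] [SMulCommClass ℂ C C] [StarModule ℂ C]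
    [NormedStarGroup C] [CompleteSpace C]
    (σ : K → C ≃⋆ₐ[ℂ] C) (hσ1 : ∀ c, σ 1 c = c)
    (hσmul : ∀ t t' c, σ (t * t') c = σ t (σ t' c))
    (hσcont : ∀ c, Continuous fun t => σ t c)
    (hσiso : ∀ t c, ‖σ t c‖ = ‖c‖)
    -- v ∈ C_c(H × P, C) with support in M × N
    (v : H × P → C) (hv : Continuous v)
    (M : Set H) (N : Set P) (hM : IsCompact M) (hN : IsCompact N)
    (hsupp : ∀ sp : H × P, v sp ≠ 0 → sp.1 ∈ M ∧ sp.2 ∈ N)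
    -- the C*-norm Nb of elements of C_c(K, C_0(P,C)), dominated by the L¹-norm
    (Nb : (K → P → C) → ℝ)
    (hNb : ∀ b : K → P → C, Nb b ≤ ∫ t, (⨆ p, ‖b t p‖) ∂μK) :
    -- the integration domain is compact
    IsCompact {t : K | ∃ p ∈ N, act p t ∈ N} ∧
    -- the estimate
    (∫ s, Nb (fun t p =>
        (Δ t ^ (-(1:ℝ)/2)) • (star (v (s, p)) * σ t (v (s, act p t)))) ∂μH) ≤
      (μH M).toReal * (⨆ sp : H × P, ‖v sp‖) ^ 2 *
        ∫ t in {t : K | ∃ p ∈ N, act p t ∈ N}, Δ t ^ (-(1:ℝ)/2) ∂μK := by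
  classical
  -- Notation
  set S : Set K := {t : K | ∃ p ∈ N, act p t ∈ N} with hSdef
  -- Part 1 : compactness of the integration domain
  have hScomp : IsCompact S := by
    have h1 : IsCompact ((fun x : P × K => (act x.1 x.2, x.1)) ⁻¹' (N ×ˢ N)) :=
      hproperK.isCompact_preimage (hN.prod hN)
    have h2 : IsCompact (Prod.snd '' ((fun x : P × K => (act x.1 x.2, x.1)) ⁻¹' (N ×ˢ N))) :=
      h1.image continuous_snd
    have heq : S = Prod.snd '' ((fun x : P × K => (act x.1 x.2, x.1)) ⁻¹' (N ×ˢ N)) := by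
      ext t
      constructor
      · rintro ⟨p, hp, hpt⟩
        exact ⟨(p, t), ⟨hpt, hp⟩, rfl⟩
      · rintro ⟨⟨p, t'⟩, ⟨h1', h2'⟩, rfl⟩
        exact ⟨p, h2', h1'⟩
    rw [heq]
    exact h2
  refine ⟨hScomp, ?_⟩
  -- the sup norm of v
  set C0 : ℝ := ⨆ sp : H × P, ‖v sp‖ with hC0def
  have hbdd : BddAbove (Set.range fun sp : H × P => ‖v sp‖) := by
    obtain ⟨B, hB⟩ := (hM.prod hN).exists_bound_of_continuousOn hv.continuousOn
    refine ⟨max B 0, ?_⟩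
    rintro x ⟨sp, rfl⟩
    by_cases h : v sp = 0
    · simp [h]
    · exact le_max_of_le_left (hB sp ⟨(hsupp sp h).1, (hsupp sp h).2⟩)
  have hC0 : ∀ sp : H × P, ‖v sp‖ ≤ C0 := fun sp => le_ciSup hbdd sp
  have hC0nonneg : 0 ≤ C0 := Real.iSup_nonneg fun sp => norm_nonneg _
  -- the weight and its positivity
  have hwpos : ∀ t : K, 0 < Δ t ^ (-(1:ℝ)/2) := fun t =>
    Real.rpow_pos_of_pos (hΔpos t) _
  set I : ℝ := ∫ t in S, Δ t ^ (-(1:ℝ)/2) ∂μK with hIdef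
  have hInonneg : 0 ≤ I := integral_nonneg fun t => (hwpos t).le
  -- a measurable set carrying the same restricted measure as S
  have hSfin : μK S ≠ ⊤ := hScomp.measure_lt_top.ne
  have hLcomp : IsCompact (closure S) := hScomp.closure
  have hLmeas : MeasurableSet (closure S) := isClosed_closure.measurableSet
  set T : Set K := toMeasurable μK S ∩ closure S with hTdef
  have hTmeas : MeasurableSet T := (measurableSet_toMeasurable _ _).inter hLmeas
  have hST : S ⊆ T := Set.subset_inter (subset_toMeasurable _ _) subset_closure
  have hrestr : μK.restrict T = μK.restrict S := by
    refine le_antisymm ?_ (Measure.restrict_mono hST le_rfl)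
    calc μK.restrict T ≤ μK.restrict (toMeasurable μK S) :=
          Measure.restrict_mono Set.inter_subset_left le_rfl
      _ = μK.restrict S := Measure.restrict_toMeasurable hSfin
  -- integrability of the dominating function on T
  have hwcont : Continuous fun t : K => C0 ^ 2 * Δ t ^ (-(1:ℝ)/2) :=
    continuous_const.mul (hΔcont.rpow_const fun t => Or.inl (hΔpos t).ne')
  have hintT : IntegrableOn (fun t : K => C0 ^ 2 * Δ t ^ (-(1:ℝ)/2)) T μK :=
    (hwcont.continuousOn.integrableOn_compact' hLcomp hLmeas).mono_set
      Set.inter_subset_right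
  -- key pointwise bound
  have key : ∀ s : H,
      Nb (fun t p => (Δ t ^ (-(1:ℝ)/2)) • (star (v (s, p)) * σ t (v (s, act p t))))
        ≤ C0 ^ 2 * I := by
    intro s
    refine (hNb _).trans ?_
    set g : K → ℝ :=
      fun t => ⨆ p, ‖(Δ t ^ (-(1:ℝ)/2)) • (star (v (s, p)) * σ t (v (s, act p t)))‖
      with hgdef
    have hgnonneg : ∀ t, 0 ≤ g t := fun t => Real.iSup_nonneg fun p => norm_nonneg _
    have hgzero : ∀ t ∉ S, g t = 0 := by
      intro t ht
      have hterm : ∀ p : P,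
          (Δ t ^ (-(1:ℝ)/2)) • (star (v (s, p)) * σ t (v (s, act p t))) = 0 := by
        intro p
        by_cases h : p ∈ N ∧ act p t ∈ N
        · exact absurd ⟨p, h.1, h.2⟩ ht
        · rcases not_and_or.1 h with h | h
          · have hv0 : v (s, p) = 0 := by
              by_contra hne; exact h (hsupp _ hne).2
            simp [hv0]
          · have hv0 : v (s, act p t) = 0 := by
              by_contra hne; exact h (hsupp _ hne).2
            simp [hv0]
      refine le_antisymm ?_ (hgnonneg t)
      exact Real.iSup_nonpos fun p => by simp [hterm p]
    have hgle : ∀ t, g t ≤ C0 ^ 2 * Δ t ^ (-(1:ℝ)/2) := by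
      intro t
      refine Real.iSup_le (fun p => ?_) (mul_nonneg (sq_nonneg _) (hwpos t).le)
      have h1 : ‖star (v (s, p)) * σ t (v (s, act p t))‖ ≤ C0 * C0 :=
        calc ‖star (v (s, p)) * σ t (v (s, act p t))‖
            ≤ ‖star (v (s, p))‖ * ‖σ t (v (s, act p t))‖ := norm_mul_le _ _
          _ = ‖v (s, p)‖ * ‖v (s, act p t)‖ := by rw [norm_star, hσiso]
          _ ≤ C0 * C0 := mul_le_mul (hC0 _) (hC0 _) (norm_nonneg _) hC0nonneg
      calc ‖(Δ t ^ (-(1:ℝ)/2)) • (star (v (s, p)) * σ t (v (s, act p t)))‖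
          = |Δ t ^ (-(1:ℝ)/2)| * ‖star (v (s, p)) * σ t (v (s, act p t))‖ := by
            rw [norm_smul, Real.norm_eq_abs]
        _ ≤ (Δ t ^ (-(1:ℝ)/2)) * (C0 * C0) := by
            rw [abs_of_pos (hwpos t)]
            exact mul_le_mul_of_nonneg_left h1 (hwpos t).le
        _ = C0 ^ 2 * Δ t ^ (-(1:ℝ)/2) := by ring
    calc (∫ t, g t ∂μK) = ∫ t in T, g t ∂μK := by
          rw [← integral_indicator hTmeas]
          congr 1
          ext t
          by_cases ht : t ∈ T
          · simp [Set.indicator_of_mem ht]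
          · rw [Set.indicator_of_notMem ht]
            exact hgzero t fun hs => ht (hST hs)
      _ ≤ ∫ t in T, C0 ^ 2 * Δ t ^ (-(1:ℝ)/2) ∂μK := by
          refine integral_mono_of_nonneg ?_ hintT ?_
          · exact Filter.Eventually.of_forall fun t => hgnonneg t
          · exact Filter.Eventually.of_forall fun t => hgle t
      _ = ∫ t in S, C0 ^ 2 * Δ t ^ (-(1:ℝ)/2) ∂μK := by rw [hrestr]
      _ = C0 ^ 2 * I := by rw [hIdef, integral_const_mul]
  -- a measurable set carrying the same measure as M
  have hMfin : μH M ≠ ⊤ := hM.measure_lt_top.ne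
  set M2 : Set H := toMeasurable μH M ∩ closure M with hM2def
  have hM2meas : MeasurableSet M2 :=
    (measurableSet_toMeasurable _ _).inter isClosed_closure.measurableSet
  have hMM2 : M ⊆ M2 := Set.subset_inter (subset_toMeasurable _ _) subset_closure
  have hμM2 : μH M2 = μH M := by
    refine le_antisymm ?_ (measure_mono hMM2)
    calc μH M2 ≤ μH (toMeasurable μH M) := measure_mono Set.inter_subset_left
      _ = μH M := measure_toMeasurable _
  have hM2fin : μH M2 < ⊤ := by rw [hμM2]; exact hM.measure_lt_top
  set c : ℝ := C0 ^ 2 * I with hcdef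
  have hcnonneg : 0 ≤ c := mul_nonneg (by positivity) hInonneg
  -- global pointwise bound for the outer integrand
  have hfle : ∀ s : H,
      Nb (fun t p => (Δ t ^ (-(1:ℝ)/2)) • (star (v (s, p)) * σ t (v (s, act p t))))
        ≤ M2.indicator (fun _ => c) s := by
    intro s
    by_cases hs : s ∈ M2
    · rw [Set.indicator_of_mem hs]
      exact key s
    · rw [Set.indicator_of_notMem hs]
      have hsM : s ∉ M := fun h => hs (hMM2 h)
      have hv0 : ∀ p : P, v (s, p) = 0 := by
        intro p
        by_contra hne
        exact hsM (hsupp _ hne).1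
      have hb0 : (fun t p => (Δ t ^ (-(1:ℝ)/2)) •
          (star (v (s, p)) * σ t (v (s, act p t)))) = fun _ _ => (0 : C) := by
        funext t p
        simp [hv0 p]
      rw [hb0]
      refine (hNb _).trans (le_of_eq ?_)
      have : (fun t : K => ⨆ _ : P, ‖(0 : C)‖) = fun _ => (0 : ℝ) := by
        funext t
        simp
      rw [this, integral_zero]
  -- conclude
  have hrhs :
      (μH M).toReal * (⨆ sp : H × P, ‖v sp‖) ^ 2 *
        (∫ t in {t : K | ∃ p ∈ N, act p t ∈ N}, Δ t ^ (-(1:ℝ)/2) ∂μK)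
      = (μH M2).toReal * c := by
    rw [hμM2, hcdef, ← hC0def, ← hSdef, ← hIdef]
    ring
  rw [hrhs]
  by_cases hf : Integrable (fun s : H =>
      Nb (fun t p => (Δ t ^ (-(1:ℝ)/2)) • (star (v (s, p)) * σ t (v (s, act p t))))) μH
  · have hind : Integrable (M2.indicator fun _ : H => c) μH := by
      rw [integrable_indicator_iff hM2meas]
      exact integrableOn_const hM2fin.ne
    calc (∫ s, Nb (fun t p => (Δ t ^ (-(1:ℝ)/2)) •
            (star (v (s, p)) * σ t (v (s, act p t)))) ∂μH)
        ≤ ∫ s, M2.indicator (fun _ => c) s ∂μH := integral_mono hf hind hfle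
      _ = (μH M2).toReal * c := by
          rw [integral_indicator_const _ hM2meas, smul_eq_mul, measureReal_def]
  · rw [integral_undef hf]
    exact mul_nonneg ENNReal.toReal_nonneg hcnonneg
end

section
/- Suppose H acts freely and properly on P, N ⊆ P is H-saturated and open with an H-equivariant homeomorphism φ : N → (H\N) × H (H acting on the second factor by left translation), and (μ,U) is a covariant representation of (C_0(P,C), H, lt⊗τ) that is nondegenerate on I_N, with invariant subspace H₁ = closure of span{μ(g)h : g ∈ I_N, h ∈ H}. Then ν₁ := (extension of μ|_{H₁} to M(I_N)) ∘ ι, where ι(f) is the multiplier acting by (ι(f)g)(p) = f(φ₂(p))g(p), is a nondegenerate representation of C_0(H) on H₁ such that (ν₁, U|_{H₁}) is a covariant representation of (C_0(H), H, lt) and ν₁(C_0(H)) commutes with μ(C_0(P,C))|_{H₁}. -/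
open ZeroAtInfty
open scoped Classical

set_option maxHeartbeats 2000000

private lemma auxAgree {E F : Type*} [NormedAddCommGroup E] [NormedSpace ℂ E]
    [NormedAddCommGroup F] [NormedSpace ℂ F] (S : Set E) (A B : E →L[ℂ] F)
    (h : ∀ z ∈ S, A z = B z) {x : E}
    (hx : x ∈ (Submodule.span ℂ S).topologicalClosure) : A x = B x := by
  have h1 : (Submodule.span ℂ S).topologicalClosure ≤
      LinearMap.eqLocus A.toLinearMap B.toLinearMap := by
    refine Submodule.topologicalClosure_minimal _ ?_ ?_
    · rw [Submodule.span_le]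
      intro z hz
      rw [SetLike.mem_coe, LinearMap.mem_eqLocus]
      exact h z hz
    · exact isClosed_eq A.continuous B.continuous
  exact LinearMap.mem_eqLocus.mp (h1 hx)

private lemma auxMaps {E : Type*} [NormedAddCommGroup E] [NormedSpace ℂ E]
    (S : Set E) (A : E →L[ℂ] E) (W : Submodule ℂ E) (hW : IsClosed (W : Set E))
    (h : ∀ z ∈ S, A z ∈ W) {x : E}
    (hx : x ∈ (Submodule.span ℂ S).topologicalClosure) : A x ∈ W := by
  have h1 : (Submodule.span ℂ S).topologicalClosure ≤ W.comap A.toLinearMap := by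
    refine Submodule.topologicalClosure_minimal _ ?_ ?_
    · rw [Submodule.span_le]
      intro z hz
      rw [SetLike.mem_coe, Submodule.mem_comap]
      exact h z hz
    · exact hW.preimage A.continuous
  exact Submodule.mem_comap.mp (h1 hx)

private lemma auxNormLe {γ B' : Type*} [TopologicalSpace γ] [NormedAddCommGroup B']
    (g : C₀(γ, B')) (Cst : ℝ) (h0 : 0 ≤ Cst) (h : ∀ p, ‖g p‖ ≤ Cst) : ‖g‖ ≤ Cst := by
  rw [← ZeroAtInftyContinuousMap.norm_toBCF_eq_norm]
  exact (BoundedContinuousFunction.norm_le h0).mpr h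

private lemma auxApplyLe {γ B' : Type*} [TopologicalSpace γ] [NormedAddCommGroup B']
    (g : C₀(γ, B')) (p : γ) : ‖g p‖ ≤ ‖g‖ := by
  rw [← ZeroAtInftyContinuousMap.norm_toBCF_eq_norm]
  exact BoundedContinuousFunction.norm_coe_le_norm g.toBCF p

/-- For `H` free and proper on `P`, an `H`-saturated open `N ⊆ P` with an
`H`-equivariant homeomorphism `φ = e : N ≃ (H\N) × H`, and a covariant representation
`(μ,U)` of `(C₀(P,C), H, lt⊗τ)` which is nonzero on `I_N`, with
`𝓗₁ = span{μ(g)h : g ∈ I_N}⁻`, the map `ν₁ = (extension of μ|_{𝓗₁} to M(I_N)) ∘ ι`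
(characterised by `ν₁(f)(μ(g)h) = μ(ι(f)g)h`) is a nondegenerate representation of
`C₀(H)` on `𝓗₁` such that `(ν₁, U|_{𝓗₁})` is covariant for `(C₀(H), H, lt)` and
`ν₁(C₀(H))` commutes with `μ(C₀(P,C))|_{𝓗₁}`. -/
theorem statement10
    (H P : Type*) [Group H] [TopologicalSpace H] [IsTopologicalGroup H]
    [LocallyCompactSpace H] [T2Space H]
    [TopologicalSpace P] [T2Space P] [LocallyCompactSpace P]
    [MulAction H P] [ContinuousSMul H P]
    (hfree : ∀ (s : H) (p : P), s • p = p → s = 1)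
    (hproper : IsProperMap (fun sp : H × P => (sp.1 • sp.2, sp.2)))
    (C : Type*) [NonUnitalNormedRing C] [StarRing C] [CStarRing C] [NormedSpace ℂ C]
    [IsScalarTower ℂ C C] [SMulCommClass ℂ C C] [StarModule ℂ C] [NormedStarGroup C]
    [CompleteSpace C]
    (τ : H → C ≃⋆ₐ[ℂ] C) (hτ1 : ∀ c, τ 1 c = c)
    (hτmul : ∀ s s' c, τ (s * s') c = τ s (τ s' c))
    (hτcont : ∀ c, Continuous fun s => τ s c)
    -- the action lt⊗τ of H on C₀(P,C)
    (α : H → C₀(P, C) → C₀(P, C)) (hα : ∀ s g p, α s g p = τ s (g (s⁻¹ • p)))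
    -- a covariant representation (μ, U) of (C₀(P,C), H, lt⊗τ) on 𝓗
    (𝓗 : Type*) [NormedAddCommGroup 𝓗] [InnerProductSpace ℂ 𝓗] [CompleteSpace 𝓗]
    (μ : C₀(P, C) → 𝓗 →L[ℂ] 𝓗)
    (hμadd : ∀ g g', μ (g + g') = μ g + μ g')
    (hμsmul : ∀ (c : ℂ) g, μ (c • g) = c • μ g)
    (hμmul : ∀ g g', μ (g * g') = (μ g).comp (μ g'))
    (hμstar : ∀ g (x y : 𝓗), (inner ℂ (μ (star g) x) y : ℂ) = inner ℂ x (μ g y))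
    (hμnd : ∀ x : 𝓗, x ∈ closure
      (Submodule.span ℂ {z : 𝓗 | ∃ g y, z = μ g y} : Set 𝓗))
    (U : H → 𝓗 ≃ₗᵢ[ℂ] 𝓗) (hU1 : ∀ x, U 1 x = x)
    (hUmul : ∀ s s' x, U (s * s') x = U s (U s' x))
    (hUcont : ∀ x, Continuous fun s => U s x)
    (hcov : ∀ s g x, U s (μ g x) = μ (α s g) (U s x))
    -- N saturated open, trivial as an H-bundle via the equivariant homeomorphism e
    (B : Type*) [TopologicalSpace B] (N : Set P) (hNopen : IsOpen N)
    (hNsat : ∀ (s : H) (q : P), q ∈ N → s • q ∈ N)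
    (e : {p : P // p ∈ N} ≃ₜ B × H)
    (heq : ∀ (s : H) (q : {p : P // p ∈ N}) (hq : s • (q : P) ∈ N),
      e ⟨s • (q : P), hq⟩ = ((e q).1, s * (e q).2))
    -- μ is nonzero (nondegenerate) on the ideal I_N
    (hμIN : ∃ g : C₀(P, C), (∀ p ∉ N, g p = 0) ∧ μ g ≠ 0)
    -- the central multiplier ι(f) of I_N, as in the construction
    (ι : C₀(H, ℂ) → C₀(P, C) → C₀(P, C))
    (hι : ∀ f g, (∀ p ∉ N, g p = 0) →
      ∀ p, ι f g p = if h : p ∈ N then f ((e ⟨p, h⟩).2) • g p else 0) :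
    -- conclusion, with 𝓗₁ the essential subspace of μ|_{I_N}
    ∃ ν₁ : C₀(H, ℂ) → 𝓗 →L[ℂ] 𝓗,
      let 𝓗₁ : Submodule ℂ 𝓗 := (Submodule.span ℂ
        {z : 𝓗 | ∃ g y, (∀ p ∉ N, g p = 0) ∧ z = μ g y}).topologicalClosure
      -- 𝓗₁ is (μ,U)-invariant
      (∀ g, ∀ x ∈ 𝓗₁, μ g x ∈ 𝓗₁) ∧ (∀ s, ∀ x ∈ 𝓗₁, U s x ∈ 𝓗₁) ∧
      -- ν₁ is determined by the extension formula ν₁(f)(μ(g)h) = μ(ι(f)g)h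
      (∀ f g y, (∀ p ∉ N, g p = 0) → ν₁ f (μ g y) = μ (ι f g) y) ∧
      -- ν₁ is a representation of C₀(H) on 𝓗₁
      (∀ f, ∀ x ∈ 𝓗₁, ν₁ f x ∈ 𝓗₁) ∧
      (∀ f f', ν₁ (f + f') = ν₁ f + ν₁ f') ∧
      (∀ (c : ℂ) f, ν₁ (c • f) = c • ν₁ f) ∧
      (∀ f f', ∀ x ∈ 𝓗₁, ν₁ (f * f') x = ν₁ f (ν₁ f' x)) ∧
      (∀ f, ∀ x ∈ 𝓗₁, ∀ y ∈ 𝓗₁, (inner ℂ (ν₁ (star f) x) y : ℂ) = inner ℂ x (ν₁ f y)) ∧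
      -- nondegeneracy of ν₁ on 𝓗₁
      (∀ x ∈ 𝓗₁, x ∈ closure
        (Submodule.span ℂ {z : 𝓗 | ∃ f y, y ∈ 𝓗₁ ∧ z = ν₁ f y} : Set 𝓗)) ∧
      -- (ν₁, U|_{𝓗₁}) is covariant for (C₀(H), H, lt)
      (∀ (s : H) (f f' : C₀(H, ℂ)), (∀ r, f' r = f (s⁻¹ * r)) →
        ∀ x ∈ 𝓗₁, U s (ν₁ f x) = ν₁ f' (U s x)) ∧
      -- ν₁(C₀(H)) commutes with μ(C₀(P,C)) on 𝓗₁
      (∀ f g, ∀ x ∈ 𝓗₁, ν₁ f (μ g x) = μ g (ν₁ f x)) := by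
  classical
  letI : NonUnitalCStarAlgebra C :=
    { ‹NonUnitalNormedRing C›, ‹StarRing C›, ‹CStarRing C›, ‹NormedSpace ℂ C›,
      ‹IsScalarTower ℂ C C›, ‹SMulCommClass ℂ C C›, ‹StarModule ℂ C›, ‹CompleteSpace C› with }
  -- basic facts about μ
  have hadj : ∀ a (x y : 𝓗), (inner ℂ (μ a x) y : ℂ) = inner ℂ x (μ (star a) y) := by
    intro a x y
    have := hμstar (star a) x y
    rwa [star_star] at this
  have hμzero : μ 0 = 0 := by simpa using hμsmul 0 0
  let Φ : C₀(P, C) →⋆ₙₐ[ℂ] (𝓗 →L[ℂ] 𝓗) :=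
    { toFun := μ
      map_smul' := fun c g => hμsmul c g
      map_zero' := hμzero
      map_add' := hμadd
      map_mul' := fun g g' => hμmul g g'
      map_star' := fun g => by
        rw [ContinuousLinearMap.star_eq_adjoint, ContinuousLinearMap.eq_adjoint_iff]
        intro x y
        exact hμstar g x y }
  have hcontr : ∀ g, ‖μ g‖ ≤ ‖g‖ := fun g => NonUnitalStarAlgHom.norm_apply_le Φ g
  have hμsub : ∀ a b, μ (a - b) = μ a - μ b := fun a b => map_sub Φ a b
  have hmul' : ∀ a b (w : 𝓗), μ (a * b) w = μ a (μ b w) := fun a b w => by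
    rw [hμmul]; rfl
  -- membership in the ideal I_N
  have hImul_l : ∀ (a g : C₀(P, C)), (∀ p ∉ N, g p = 0) → ∀ p ∉ N, (a * g) p = 0 := by
    intro a g hg p hp
    rw [ZeroAtInftyContinuousMap.mul_apply, hg p hp, mul_zero]
  have hImul_r : ∀ (g a : C₀(P, C)), (∀ p ∉ N, g p = 0) → ∀ p ∉ N, (g * a) p = 0 := by
    intro g a hg p hp
    rw [ZeroAtInftyContinuousMap.mul_apply, hg p hp, zero_mul]
  have hIstar : ∀ (g : C₀(P, C)), (∀ p ∉ N, g p = 0) → ∀ p ∉ N, (star g) p = 0 := by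
    intro g hg p hp
    rw [ZeroAtInftyContinuousMap.star_apply, hg p hp, star_zero]
  have hNsat' : ∀ (s : H) (p : P), p ∈ N → s⁻¹ • p ∈ N := fun s p hp => hNsat s⁻¹ p hp
  have hNsat'' : ∀ (s : H) (p : P), p ∉ N → s⁻¹ • p ∉ N := by
    intro s p hp hmem
    apply hp
    have := hNsat s _ hmem
    rwa [smul_inv_smul] at this
  have hIα : ∀ (s : H) (g : C₀(P, C)), (∀ p ∉ N, g p = 0) → ∀ p ∉ N, (α s g) p = 0 := by
    intro s g hg p hp
    rw [hα s g p, hg _ (hNsat'' s p hp), map_zero]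
  -- basic facts about ι
  have hιI : ∀ f (g : C₀(P, C)) (hg : ∀ p ∉ N, g p = 0), ∀ p ∉ N, (ι f g) p = 0 := by
    intro f g hg p hp
    rw [hι f g hg p, dif_neg hp]
  have hιval : ∀ f (g : C₀(P, C)) (hg : ∀ p ∉ N, g p = 0) (p : P) (hp : p ∈ N),
      ι f g p = f ((e ⟨p, hp⟩).2) • g p := by
    intro f g hg p hp
    rw [hι f g hg p, dif_pos hp]
  have Lmull : ∀ f (a g : C₀(P, C)) (hg : ∀ p ∉ N, g p = 0), a * ι f g = ι f (a * g) := by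
    intro f a g hg
    ext p
    by_cases hp : p ∈ N
    · rw [ZeroAtInftyContinuousMap.mul_apply, hιval f g hg p hp,
        hιval f (a * g) (hImul_l a g hg) p hp, ZeroAtInftyContinuousMap.mul_apply,
        mul_smul_comm]
    · rw [ZeroAtInftyContinuousMap.mul_apply, hιI f g hg p hp, mul_zero,
        hιI f (a * g) (hImul_l a g hg) p hp]
  have Lmulr : ∀ f (g a : C₀(P, C)) (hg : ∀ p ∉ N, g p = 0), ι f g * a = ι f (g * a) := by
    intro f g a hg
    ext p
    by_cases hp : p ∈ N
    · rw [ZeroAtInftyContinuousMap.mul_apply, hιval f g hg p hp,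
        hιval f (g * a) (hImul_r g a hg) p hp, ZeroAtInftyContinuousMap.mul_apply,
        smul_mul_assoc]
    · rw [ZeroAtInftyContinuousMap.mul_apply, hιI f g hg p hp, zero_mul,
        hιI f (g * a) (hImul_r g a hg) p hp]
  have Lstar : ∀ f (g : C₀(P, C)) (hg : ∀ p ∉ N, g p = 0),
      star (ι f g) = ι (star f) (star g) := by
    intro f g hg
    ext p
    by_cases hp : p ∈ N
    · rw [ZeroAtInftyContinuousMap.star_apply, hιval f g hg p hp,
        hιval (star f) (star g) (hIstar g hg) p hp, ZeroAtInftyContinuousMap.star_apply,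
        ZeroAtInftyContinuousMap.star_apply, star_smul]
    · rw [ZeroAtInftyContinuousMap.star_apply, hιI f g hg p hp, star_zero,
        hιI (star f) (star g) (hIstar g hg) p hp]
  have Lcomp : ∀ f f' (g : C₀(P, C)) (hg : ∀ p ∉ N, g p = 0),
      ι f (ι f' g) = ι (f * f') g := by
    intro f f' g hg
    ext p
    by_cases hp : p ∈ N
    · rw [hιval f (ι f' g) (hιI f' g hg) p hp, hιval f' g hg p hp,
        hιval (f * f') g hg p hp, ZeroAtInftyContinuousMap.mul_apply, smul_smul]
    · rw [hιI f (ι f' g) (hιI f' g hg) p hp, hιI (f * f') g hg p hp]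
  have Ladd : ∀ f f' (g : C₀(P, C)) (hg : ∀ p ∉ N, g p = 0),
      ι (f + f') g = ι f g + ι f' g := by
    intro f f' g hg
    ext p
    by_cases hp : p ∈ N
    · rw [ZeroAtInftyContinuousMap.add_apply, hιval (f + f') g hg p hp, hιval f g hg p hp,
        hιval f' g hg p hp, ZeroAtInftyContinuousMap.add_apply, add_smul]
    · rw [ZeroAtInftyContinuousMap.add_apply, hιI (f + f') g hg p hp, hιI f g hg p hp,
        hιI f' g hg p hp, add_zero]
  have Lsmul : ∀ (c : ℂ) f (g : C₀(P, C)) (hg : ∀ p ∉ N, g p = 0),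
      ι (c • f) g = c • ι f g := by
    intro c f g hg
    ext p
    by_cases hp : p ∈ N
    · rw [ZeroAtInftyContinuousMap.smul_apply, hιval (c • f) g hg p hp, hιval f g hg p hp,
        ZeroAtInftyContinuousMap.smul_apply, smul_assoc]
    · rw [ZeroAtInftyContinuousMap.smul_apply, hιI (c • f) g hg p hp, hιI f g hg p hp,
        smul_zero]
  have Lnorm : ∀ f (g : C₀(P, C)) (hg : ∀ p ∉ N, g p = 0), ‖ι f g‖ ≤ ‖f‖ * ‖g‖ := by
    intro f g hg
    refine auxNormLe _ _ (by positivity) fun p => ?_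
    by_cases hp : p ∈ N
    · rw [hιval f g hg p hp, norm_smul]
      exact mul_le_mul (auxApplyLe f _) (auxApplyLe g p) (norm_nonneg _) (norm_nonneg _)
    · rw [hιI f g hg p hp, norm_zero]
      positivity
  have Lcov : ∀ (s : H) (f f' : C₀(H, ℂ)) (g : C₀(P, C)) (hg : ∀ p ∉ N, g p = 0),
      (∀ r, f' r = f (s⁻¹ * r)) → α s (ι f g) = ι f' (α s g) := by
    intro s f f' g hg hf'
    ext p
    by_cases hp : p ∈ N
    · have hp' : s⁻¹ • p ∈ N := hNsat' s p hp
      rw [hα s (ι f g) p, hιval f g hg _ hp', hιval f' (α s g) (hIα s g hg) p hp,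
        hα s g p, map_smul]
      congr 1
      rw [hf']
      congr 1
      have hq : s • ((⟨s⁻¹ • p, hp'⟩ : {x : P // x ∈ N}) : P) ∈ N := by
        show s • (s⁻¹ • p) ∈ N
        rw [smul_inv_smul]
        exact hp
      have h2 := heq s ⟨s⁻¹ • p, hp'⟩ hq
      have h3 : (⟨s • ((⟨s⁻¹ • p, hp'⟩ : {x : P // x ∈ N}) : P), hq⟩ : {x : P // x ∈ N})
          = ⟨p, hp⟩ := Subtype.ext (by simp)
      rw [h3] at h2
      rw [congrArg Prod.snd h2, inv_mul_cancel_left]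
    · rw [hα s (ι f g) p, hιI f g hg _ (hNsat'' s p hp), map_zero,
        hιI f' (α s g) (hIα s g hg) p hp]
  -- the Finsupp machinery
  let ix := {g : C₀(P, C) // ∀ p ∉ N, g p = 0} × 𝓗
  let v : ix → 𝓗 := fun i => μ i.1.1 i.2
  let π : (ix →₀ ℂ) →ₗ[ℂ] 𝓗 := Finsupp.linearCombination ℂ v
  let σ : C₀(H, ℂ) → (ix →₀ ℂ) →ₗ[ℂ] 𝓗 := fun f =>
    Finsupp.linearCombination ℂ (fun i : ix => μ (ι f i.1.1) i.2)
  have key_inner : ∀ (f f' : C₀(H, ℂ)) (i j : ix),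
      (inner ℂ (μ (ι f i.1.1) i.2) (μ (ι f' j.1.1) j.2) : ℂ)
        = inner ℂ (v i) (μ (ι (star f * f') j.1.1) j.2) := by
    rintro f f' ⟨⟨g, hg⟩, u⟩ ⟨⟨g', hg'⟩, u'⟩
    show (inner ℂ (μ (ι f g) u) (μ (ι f' g') u') : ℂ) = inner ℂ (μ g u) (μ (ι (star f * f') g') u')
    have halg : star (ι f g) * ι f' g' = star g * ι (star f * f') g' := by
      calc star (ι f g) * ι f' g'
          = ι (star f) (star g) * ι f' g' := by rw [Lstar f g hg]
        _ = ι (star f) (star g * ι f' g') := Lmulr (star f) (star g) (ι f' g') (hIstar g hg)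
        _ = ι (star f) (ι f' (star g * g')) := by rw [Lmull f' (star g) g' hg']
        _ = ι (star f * f') (star g * g') :=
            Lcomp (star f) f' (star g * g') (hImul_l (star g) g' hg')
        _ = star g * ι (star f * f') g' := (Lmull (star f * f') (star g) g' hg').symm
    rw [hadj, ← hmul', halg, hmul', ← hadj]
  have inner_sigma : ∀ (f f' : C₀(H, ℂ)) (m m' : ix →₀ ℂ),
      (inner ℂ (σ f m) (σ f' m') : ℂ) = inner ℂ (π m) (σ (star f * f') m') := by
    intro f f' m m'
    show (inner ℂ (Finsupp.linearCombination ℂ (fun i : ix => μ (ι f i.1.1) i.2) m)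
        (Finsupp.linearCombination ℂ (fun i : ix => μ (ι f' i.1.1) i.2) m') : ℂ)
      = inner ℂ (Finsupp.linearCombination ℂ v m)
        (Finsupp.linearCombination ℂ (fun i : ix => μ (ι (star f * f') i.1.1) i.2) m')
    rw [Finsupp.linearCombination_apply, Finsupp.linearCombination_apply,
      Finsupp.linearCombination_apply, Finsupp.linearCombination_apply]
    rw [Finsupp.sum, Finsupp.sum, Finsupp.sum, Finsupp.sum, sum_inner, sum_inner]
    refine Finset.sum_congr rfl fun i _ => ?_
    rw [inner_sum, inner_sum]
    refine Finset.sum_congr rfl fun j _ => ?_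
    rw [inner_smul_left, inner_smul_right, inner_smul_left, inner_smul_right,
      key_inner f f' i j]
  have step : ∀ (h : C₀(H, ℂ)) (m : ix →₀ ℂ),
      ‖σ h m‖ ^ 2 ≤ ‖π m‖ * ‖σ (star h * h) m‖ := by
    intro h m
    have h1 : (inner ℂ (σ h m) (σ h m) : ℂ) = inner ℂ (π m) (σ (star h * h) m) :=
      inner_sigma h h m m
    have h2 : ‖(inner ℂ (σ h m) (σ h m) : ℂ)‖ = ‖σ h m‖ ^ 2 := by
      rw [inner_self_eq_norm_sq_to_K, norm_pow, RCLike.norm_ofReal, abs_norm]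
    calc ‖σ h m‖ ^ 2 = ‖(inner ℂ (π m) (σ (star h * h) m) : ℂ)‖ := by rw [← h2, h1]
      _ ≤ ‖π m‖ * ‖σ (star h * h) m‖ := norm_inner_le_norm _ _
  have bound : ∀ (f : C₀(H, ℂ)) (m : ix →₀ ℂ), ‖σ f m‖ ≤ ‖f‖ * ‖π m‖ := by
    intro f m
    by_contra hcon
    push_neg at hcon
    have hKb : ∀ (h : C₀(H, ℂ)), ‖σ h m‖ ≤ ‖h‖ *
        ∑ i ∈ m.support, ‖m i‖ * ‖(i.1.1 : C₀(P, C))‖ * ‖i.2‖ := by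
      intro h
      have hval : σ h m = ∑ i ∈ m.support, m i • μ (ι h i.1.1) i.2 := by
        show Finsupp.linearCombination ℂ (fun i : ix => μ (ι h i.1.1) i.2) m = _
        rw [Finsupp.linearCombination_apply, Finsupp.sum]
      rw [hval, Finset.mul_sum]
      refine (norm_sum_le _ _).trans (Finset.sum_le_sum fun i _ => ?_)
      rw [norm_smul]
      have h1 : ‖μ (ι h i.1.1) i.2‖ ≤ ‖h‖ * ‖(i.1.1 : C₀(P, C))‖ * ‖i.2‖ := by
        refine ((μ (ι h i.1.1)).le_opNorm i.2).trans ?_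
        exact mul_le_mul_of_nonneg_right
          ((hcontr (ι h i.1.1)).trans (Lnorm h i.1.1 i.1.2)) (norm_nonneg _)
      calc ‖m i‖ * ‖μ (ι h i.1.1) i.2‖
          ≤ ‖m i‖ * (‖h‖ * ‖(i.1.1 : C₀(P, C))‖ * ‖i.2‖) :=
            mul_le_mul_of_nonneg_left h1 (norm_nonneg _)
        _ = ‖h‖ * (‖m i‖ * ‖(i.1.1 : C₀(P, C))‖ * ‖i.2‖) := by ring
    set Km := ∑ i ∈ m.support, ‖m i‖ * ‖(i.1.1 : C₀(P, C))‖ * ‖i.2‖ with hKmdef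
    have hKm0 : 0 ≤ Km := Finset.sum_nonneg fun i _ => by positivity
    set a := ‖σ f m‖ with hadef
    set X := ‖π m‖ with hXdef
    let F : ℕ → C₀(H, ℂ) := fun n => Nat.rec (star f * f) (fun _ c => c * c) n
    have hFs : ∀ n, F (n + 1) = F n * F n := fun n => rfl
    have hFstar : ∀ n, star (F n) = F n := by
      intro n
      induction n with
      | zero =>
        show star (star f * f) = star f * f
        ext r
        simp [ZeroAtInftyContinuousMap.star_apply, ZeroAtInftyContinuousMap.mul_apply,
          star_star, mul_comm]
      | succ n ih =>
        rw [hFs n]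
        have ihr : ∀ r, star (F n r) = F n r := by
          intro r
          have h2 := congrArg (fun (h : C₀(H, ℂ)) => h r) ih
          simpa [ZeroAtInftyContinuousMap.star_apply] using h2
        ext r
        simp [ZeroAtInftyContinuousMap.star_apply, ZeroAtInftyContinuousMap.mul_apply,
          ihr, mul_comm]
    have hFnorm : ∀ n, ‖F n‖ ≤ ‖f‖ ^ 2 ^ (n + 1) := by
      intro n
      induction n with
      | zero =>
        show ‖star f * f‖ ≤ ‖f‖ ^ 2 ^ 1
        calc ‖star f * f‖ ≤ ‖star f‖ * ‖f‖ := norm_mul_le _ _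
          _ ≤ ‖f‖ * ‖f‖ :=
              mul_le_mul_of_nonneg_right (norm_star f).le (norm_nonneg f)
          _ = ‖f‖ ^ 2 ^ 1 := by rw [show (2 : ℕ) ^ 1 = 2 from rfl, sq]
      | succ n ih =>
        calc ‖F (n + 1)‖ = ‖F n * F n‖ := by rw [hFs]
          _ ≤ ‖F n‖ * ‖F n‖ := norm_mul_le _ _
          _ ≤ ‖f‖ ^ 2 ^ (n + 1) * ‖f‖ ^ 2 ^ (n + 1) :=
              mul_le_mul ih ih (norm_nonneg _) ((norm_nonneg _).trans ih)
          _ = ‖f‖ ^ 2 ^ (n + 2) := by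
              rw [← pow_add]
              congr 1
              have he1 : 2 ^ (n + 2) = 2 ^ (n + 1) * 2 := pow_succ 2 (n + 1)
              omega
    have hstep2 : ∀ n, ‖σ (F n) m‖ ^ 2 ≤ X * ‖σ (F (n + 1)) m‖ := by
      intro n
      have h1 := step (F n) m
      rwa [hFstar n, ← hFs n] at h1
    have iter : ∀ n, a ^ 2 ^ (n + 1) ≤ X ^ (2 ^ (n + 1) - 1) * ‖σ (F n) m‖ := by
      intro n
      induction n with
      | zero =>
        have h0 := step f m
        have he : (2 : ℕ) ^ (0 + 1) = 2 := rfl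
        rw [he, show (2 : ℕ) - 1 = 1 from rfl, pow_one]
        exact h0
      | succ n ih =>
        have hk1 : 1 ≤ 2 ^ (n + 1) := Nat.one_le_two_pow
        have he1 : 2 ^ (n + 2) = 2 ^ (n + 1) * 2 := pow_succ 2 (n + 1)
        have he2 : (2 ^ (n + 1) - 1) * 2 + 1 = 2 ^ (n + 2) - 1 := by omega
        calc a ^ 2 ^ (n + 2) = (a ^ 2 ^ (n + 1)) ^ 2 := by rw [he1, pow_mul]
          _ ≤ (X ^ (2 ^ (n + 1) - 1) * ‖σ (F n) m‖) ^ 2 := by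
              apply pow_le_pow_left₀ (by positivity) ih
          _ = X ^ ((2 ^ (n + 1) - 1) * 2) * ‖σ (F n) m‖ ^ 2 := by rw [mul_pow, pow_mul]
          _ ≤ X ^ ((2 ^ (n + 1) - 1) * 2) * (X * ‖σ (F (n + 1)) m‖) :=
              mul_le_mul_of_nonneg_left (hstep2 n) (by positivity)
          _ = X ^ ((2 ^ (n + 1) - 1) * 2 + 1) * ‖σ (F (n + 1)) m‖ := by
              rw [pow_succ]; ring
          _ = X ^ (2 ^ (n + 2) - 1) * ‖σ (F (n + 1)) m‖ := by rw [he2]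
    have final : ∀ n, a ^ 2 ^ (n + 1) ≤ X ^ (2 ^ (n + 1) - 1) * (‖f‖ ^ 2 ^ (n + 1) * Km) := by
      intro n
      refine (iter n).trans (mul_le_mul_of_nonneg_left ?_ (by positivity))
      exact (hKb (F n)).trans (mul_le_mul_of_nonneg_right (hFnorm n) hKm0)
    have ha0 : 0 < a := lt_of_le_of_lt (by positivity) hcon
    have hX0 : 0 < X := by
      have hXnn : (0 : ℝ) ≤ X := norm_nonneg (π m)
      rcases hXnn.eq_or_lt with hX | hX
      · exfalso
        have h1 := final 0
        rw [← hX] at h1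
        norm_num at h1
        nlinarith [ha0, h1]
      · exact hX
    have hf0 : 0 < ‖f‖ := by
      have hfnn : (0 : ℝ) ≤ ‖f‖ := norm_nonneg f
      rcases hfnn.eq_or_lt with hf | hf
      · exfalso
        have h1 := final 0
        rw [← hf] at h1
        norm_num at h1
        nlinarith [ha0, h1]
      · exact hf
    set b := ‖f‖ * X with hbdef
    have hb0 : 0 < b := mul_pos hf0 hX0
    have hr : 1 < a / b := (one_lt_div hb0).mpr hcon
    have hkey : ∀ n, (a / b) ^ 2 ^ (n + 1) ≤ Km / X := by
      intro n
      rw [div_pow, div_le_div_iff₀ (by positivity) hX0]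
      have hXpow : X ^ (2 ^ (n + 1) - 1) * X = X ^ 2 ^ (n + 1) := by
        rw [← pow_succ]
        congr 1
        have hk1 : 1 ≤ 2 ^ (n + 1) := Nat.one_le_two_pow
        omega
      calc a ^ 2 ^ (n + 1) * X
          ≤ X ^ (2 ^ (n + 1) - 1) * (‖f‖ ^ 2 ^ (n + 1) * Km) * X :=
            mul_le_mul_of_nonneg_right (final n) hX0.le
        _ = Km * (‖f‖ ^ 2 ^ (n + 1) * (X ^ (2 ^ (n + 1) - 1) * X)) := by ring
        _ = Km * (‖f‖ ^ 2 ^ (n + 1) * X ^ 2 ^ (n + 1)) := by rw [hXpow]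
        _ = Km * b ^ 2 ^ (n + 1) := by rw [hbdef, mul_pow]
    obtain ⟨k, hk⟩ := pow_unbounded_of_one_lt (Km / X) hr
    have hkk : k ≤ 2 ^ (k + 1) := (Nat.lt_two_pow_self (n := k)).le.trans
      (Nat.pow_le_pow_right (by norm_num) k.le_succ)
    have hk2 : (a / b) ^ k ≤ (a / b) ^ 2 ^ (k + 1) := pow_le_pow_right₀ hr.le hkk
    exact absurd (hkey k) (not_le.mpr (lt_of_lt_of_le hk hk2))
  -- well-definedness, and the operator on the range
  have hker : ∀ f, LinearMap.ker π ≤ LinearMap.ker (σ f) := by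
    intro f m hm
    rw [LinearMap.mem_ker] at hm ⊢
    have := bound f m
    rw [hm, norm_zero, mul_zero] at this
    exact norm_le_zero_iff.mp this
  let σ' : C₀(H, ℂ) → (LinearMap.range π →ₗ[ℂ] 𝓗) := fun f =>
    ((LinearMap.ker π).liftQ (σ f) (hker f)).comp
      (LinearMap.quotKerEquivRange π).symm.toLinearMap
  have hσ'apply : ∀ f m (h : π m ∈ LinearMap.range π), σ' f ⟨π m, h⟩ = σ f m := by
    intro f m h
    show ((LinearMap.ker π).liftQ (σ f) (hker f))
      ((LinearMap.quotKerEquivRange π).symm ⟨π m, h⟩) = σ f m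
    rw [LinearMap.quotKerEquivRange_symm_apply_image π m]
    rw [Submodule.mkQ_apply, Submodule.liftQ_apply]
  have hσ'bound : ∀ f (x : LinearMap.range π), ‖σ' f x‖ ≤ ‖f‖ * ‖x‖ := by
    intro f x
    obtain ⟨m, hm⟩ := x.2
    have hx : x = ⟨π m, LinearMap.mem_range_self π m⟩ := Subtype.ext hm.symm
    rw [hx, hσ'apply f m]
    exact bound f m
  let σc : C₀(H, ℂ) → (LinearMap.range π →L[ℂ] 𝓗) := fun f =>
    LinearMap.mkContinuous (σ' f) ‖f‖ (hσ'bound f)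
  -- the closed subspace
  let genSet : Set 𝓗 := {z : 𝓗 | ∃ g y, (∀ p ∉ N, g p = 0) ∧ z = μ g y}
  let W : Submodule ℂ 𝓗 := (Submodule.span ℂ genSet).topologicalClosure
  have hrange : LinearMap.range π = Submodule.span ℂ genSet := by
    have hrv : Set.range v = genSet := by
      ext z
      constructor
      · rintro ⟨⟨⟨g, hg⟩, y⟩, rfl⟩
        exact ⟨g, y, hg, rfl⟩
      · rintro ⟨g, y, hg, rfl⟩
        exact ⟨⟨⟨g, hg⟩, y⟩, rfl⟩
    show LinearMap.range (Finsupp.linearCombination ℂ v) = _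
    rw [Finsupp.range_linearCombination, hrv]
  have hgenW : genSet ⊆ (W : Set 𝓗) := fun z hz =>
    Submodule.le_topologicalClosure _ (Submodule.subset_span hz)
  have hDleW : LinearMap.range π ≤ W := by
    rw [hrange]
    exact Submodule.le_topologicalClosure _
  have hWclosed : IsClosed (W : Set 𝓗) := Submodule.isClosed_topologicalClosure _
  haveI : CompleteSpace W := hWclosed.completeSpace_coe
  -- the inclusion of the range into W
  let J : LinearMap.range π →L[ℂ] W :=
    LinearMap.mkContinuous (Submodule.inclusion hDleW) 1
      (fun x => by rw [one_mul]; rfl)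
  have hJiso : Isometry J := AddMonoidHomClass.isometry_of_norm J (fun x => rfl)
  have hJui : IsUniformInducing J := hJiso.isUniformInducing
  have hJdense : DenseRange J := by
    intro y
    rw [mem_closure_iff]
    intro O hO hyO
    rcases isOpen_induced_iff.mp hO with ⟨V, hV, rfl⟩
    have hy1 : (y : 𝓗) ∈ closure ((Submodule.span ℂ genSet : Submodule ℂ 𝓗) : Set 𝓗) :=
      y.2
    rcases mem_closure_iff.mp hy1 V hV hyO with ⟨z, hzV, hzS⟩
    have hzD : z ∈ LinearMap.range π := by rw [hrange]; exact hzS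
    exact ⟨J ⟨z, hzD⟩, hzV, ⟨z, hzD⟩, rfl⟩
  -- the operator ν
  let ν : C₀(H, ℂ) → 𝓗 →L[ℂ] 𝓗 := fun f =>
    ((σc f).extend J).comp (W.orthogonalProjectionOnto)
  have hνapp : ∀ f x, ν f x = ((σc f).extend J) (W.orthogonalProjectionOnto x) :=
    fun f x => rfl
  have EXT : ∀ f g y (hg : ∀ p ∉ N, g p = 0), ν f (μ g y) = μ (ι f g) y := by
    intro f g y hg
    have hπ : π (Finsupp.single ((⟨g, hg⟩ : {g : C₀(P, C) // ∀ p ∉ N, g p = 0}), y) 1)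
        = μ g y := by
      show Finsupp.linearCombination ℂ v _ = _
      rw [Finsupp.linearCombination_single, one_smul]
    have hmemD : μ g y ∈ LinearMap.range π := ⟨_, hπ⟩
    have hmemW : μ g y ∈ W := hDleW hmemD
    have hPr : W.orthogonalProjectionOnto (μ g y) = ⟨μ g y, hmemW⟩ :=
      Submodule.orthogonalProjectionOnto_mem_subspace_eq_self (⟨μ g y, hmemW⟩ : W)
    have hJd : J ⟨μ g y, hmemD⟩ = ⟨μ g y, hmemW⟩ := rfl
    rw [hνapp, hPr, ← hJd, ContinuousLinearMap.extend_eq (h_dense := hJdense) (h_e := hJui)]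
    show σ' f ⟨μ g y, hmemD⟩ = μ (ι f g) y
    have hx : (⟨μ g y, hmemD⟩ : LinearMap.range π) = ⟨π _, LinearMap.mem_range_self π _⟩ := Subtype.ext hπ.symm
    rw [hx, hσ'apply]
    show Finsupp.linearCombination ℂ (fun i : ix => μ (ι f i.1.1) i.2) _ = _
    rw [Finsupp.linearCombination_single, one_smul]
  have hσW : ∀ f (m : ix →₀ ℂ), σ f m ∈ W := by
    intro f m
    have hval : σ f m = ∑ i ∈ m.support, m i • μ (ι f i.1.1) i.2 := by
      show Finsupp.linearCombination ℂ (fun i : ix => μ (ι f i.1.1) i.2) m = _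
      rw [Finsupp.linearCombination_apply, Finsupp.sum]
    rw [hval]
    refine Submodule.sum_mem _ fun i _ => Submodule.smul_mem _ _ ?_
    exact hgenW ⟨ι f i.1.1, i.2, hιI f i.1.1 i.1.2, rfl⟩

  have MEMW : ∀ f (w : W), ((σc f).extend J) w ∈ W := by
    intro f w
    refine hJdense.induction_on w ?_ ?_
    · exact hWclosed.preimage ((σc f).extend J).continuous
    · intro d
      rw [ContinuousLinearMap.extend_eq (h_dense := hJdense) (h_e := hJui)]
      obtain ⟨m, hm⟩ := d.2
      have hd : d = ⟨π m, LinearMap.mem_range_self π m⟩ := Subtype.ext hm.symm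
      rw [hd]
      show σ' f ⟨π m, LinearMap.mem_range_self π m⟩ ∈ W
      rw [hσ'apply]
      exact hσW f m
  have MEM : ∀ f x, ν f x ∈ W := fun f x => MEMW f (W.orthogonalProjectionOnto x)
  have FACT : ∀ f x, ν f x = ν f ((W.orthogonalProjectionOnto x : 𝓗)) := by
    intro f x
    rw [hνapp, hνapp, Submodule.orthogonalProjectionOnto_mem_subspace_eq_self]
  have AGREE : ∀ (A B : 𝓗 →L[ℂ] 𝓗),
      (∀ g y, (∀ p ∉ N, g p = 0) → A (μ g y) = B (μ g y)) → ∀ x ∈ W, A x = B x := by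
    intro A B hAB x hx
    exact auxAgree genSet A B (by rintro z ⟨g, y, hg, rfl⟩; exact hAB g y hg) hx
  have AGREEC : ∀ (A B : 𝓗 →L[ℂ] ℂ),
      (∀ g y, (∀ p ∉ N, g p = 0) → A (μ g y) = B (μ g y)) → ∀ x ∈ W, A x = B x := by
    intro A B hAB x hx
    exact auxAgree genSet A B (by rintro z ⟨g, y, hg, rfl⟩; exact hAB g y hg) hx
  -- assemble the statement
  refine ⟨ν, ?_⟩
  intro 𝓗₁
  refine ⟨?_, ?_, ?_, ?_, ?_, ?_, ?_, ?_, ?_, ?_, ?_⟩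
  -- (1) μ-invariance
  · intro g x hx
    refine auxMaps genSet (μ g) W hWclosed ?_ hx
    rintro z ⟨g₀, y, hg₀, rfl⟩
    rw [← hmul']
    exact hgenW ⟨g * g₀, y, hImul_l g g₀ hg₀, rfl⟩
  -- (2) U-invariance
  · intro s x hx
    have h1 : ∀ z ∈ genSet, ((U s).toLinearIsometry.toContinuousLinearMap) z ∈ W := by
      rintro z ⟨g, y, hg, rfl⟩
      show U s (μ g y) ∈ W
      rw [hcov]
      exact hgenW ⟨α s g, U s y, hIα s g hg, rfl⟩
    exact auxMaps genSet _ W hWclosed h1 hx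
  -- (3) extension formula
  · exact fun f g y hg => EXT f g y hg
  -- (4) ν maps into 𝓗₁
  · exact fun f x _ => MEM f x
  -- (5) additivity
  · intro f f'
    ext x
    have hx : ((W.orthogonalProjectionOnto x : 𝓗)) ∈ W := (W.orthogonalProjectionOnto x).2
    have hAB : ∀ g y, (∀ p ∉ N, g p = 0) →
        (ν (f + f')) (μ g y) = (ν f + ν f') (μ g y) := by
      intro g y hg
      rw [ContinuousLinearMap.add_apply, EXT _ _ _ hg, EXT _ _ _ hg, EXT _ _ _ hg,
        Ladd f f' g hg, hμadd, ContinuousLinearMap.add_apply]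
    have h2 := AGREE _ _ hAB _ hx
    calc ν (f + f') x = ν (f + f') ((W.orthogonalProjectionOnto x : 𝓗)) := FACT _ x
      _ = (ν f + ν f') ((W.orthogonalProjectionOnto x : 𝓗)) := h2
      _ = ν f ((W.orthogonalProjectionOnto x : 𝓗))
          + ν f' ((W.orthogonalProjectionOnto x : 𝓗)) := rfl
      _ = ν f x + ν f' x := by rw [← FACT, ← FACT]
      _ = (ν f + ν f') x := rfl
  -- (6) scalar multiplication
  · intro c f
    ext x
    have hx : ((W.orthogonalProjectionOnto x : 𝓗)) ∈ W := (W.orthogonalProjectionOnto x).2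
    have hAB : ∀ g y, (∀ p ∉ N, g p = 0) →
        (ν (c • f)) (μ g y) = (c • ν f) (μ g y) := by
      intro g y hg
      rw [ContinuousLinearMap.smul_apply, EXT _ _ _ hg, EXT _ _ _ hg,
        Lsmul c f g hg, hμsmul, ContinuousLinearMap.smul_apply]
    have h2 := AGREE _ _ hAB _ hx
    calc ν (c • f) x = ν (c • f) ((W.orthogonalProjectionOnto x : 𝓗)) := FACT _ x
      _ = (c • ν f) ((W.orthogonalProjectionOnto x : 𝓗)) := h2
      _ = c • ν f ((W.orthogonalProjectionOnto x : 𝓗)) := rfl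
      _ = c • ν f x := by rw [← FACT]
      _ = (c • ν f) x := rfl
  -- (7) multiplicativity on 𝓗₁
  · intro f f' x hx
    have hAB : ∀ g y, (∀ p ∉ N, g p = 0) →
        (ν (f * f')) (μ g y) = ((ν f).comp (ν f')) (μ g y) := by
      intro g y hg
      show ν (f * f') (μ g y) = ν f (ν f' (μ g y))
      rw [EXT (f * f') g y hg, EXT f' g y hg, EXT f (ι f' g) y (hιI f' g hg),
        Lcomp f f' g hg]
    exact AGREE _ _ hAB x hx
  -- (8) star / adjoint property on 𝓗₁
  · intro f x hx y hy
    have pass1 : ∀ g y₀, (∀ p ∉ N, g p = 0) → ∀ w, w ∈ W →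
        (inner ℂ (ν (star f) (μ g y₀)) w : ℂ) = inner ℂ (μ g y₀) (ν f w) := by
      intro g y₀ hg w hw
      have hAB : ∀ g' y', (∀ p ∉ N, g' p = 0) →
          (innerSL ℂ (ν (star f) (μ g y₀))) (μ g' y')
            = ((innerSL ℂ (μ g y₀)).comp (ν f)) (μ g' y') := by
        intro g' y' hg'
        show (inner ℂ (ν (star f) (μ g y₀)) (μ g' y') : ℂ) = inner ℂ (μ g y₀) (ν f (μ g' y'))
        rw [EXT (star f) g y₀ hg, EXT f g' y' hg']
        have halg2 : star (ι (star f) g) * g' = star g * ι f g' := by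
          calc star (ι (star f) g) * g'
              = ι (star (star f)) (star g) * g' := by rw [Lstar _ _ hg]
            _ = ι f (star g) * g' := by rw [star_star]
            _ = ι f (star g * g') := Lmulr f (star g) g' (hIstar g hg)
            _ = star g * ι f g' := (Lmull f (star g) g' hg').symm
        rw [hadj, ← hmul', halg2, hmul', ← hadj]
      have h2 := AGREEC _ _ hAB w hw
      exact h2
    have pass2 : ∀ x₀, x₀ ∈ W →
        (inner ℂ (ν (star f) x₀) y : ℂ) = inner ℂ x₀ (ν f y) := by
      intro x₀ hx₀
      have hAB : ∀ g y₀, (∀ p ∉ N, g p = 0) →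
          ((innerSL ℂ y).comp (ν (star f))) (μ g y₀)
            = (innerSL ℂ (ν f y)) (μ g y₀) := by
        intro g y₀ hg
        show (inner ℂ y (ν (star f) (μ g y₀)) : ℂ) = inner ℂ (ν f y) (μ g y₀)
        have h1 := pass1 g y₀ hg y hy
        calc (inner ℂ y (ν (star f) (μ g y₀)) : ℂ)
            = starRingEnd ℂ (inner ℂ (ν (star f) (μ g y₀)) y) := (inner_conj_symm _ _).symm
          _ = starRingEnd ℂ (inner ℂ (μ g y₀) (ν f y)) := by rw [h1]
          _ = inner ℂ (ν f y) (μ g y₀) := inner_conj_symm _ _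
      have h2 := AGREEC _ _ hAB x₀ hx₀
      have h2' : (inner ℂ y (ν (star f) x₀) : ℂ) = inner ℂ (ν f y) x₀ := h2
      calc (inner ℂ (ν (star f) x₀) y : ℂ)
          = starRingEnd ℂ (inner ℂ y (ν (star f) x₀)) := (inner_conj_symm _ _).symm
        _ = starRingEnd ℂ (inner ℂ (ν f y) x₀) := by rw [h2']
        _ = inner ℂ x₀ (ν f y) := inner_conj_symm _ _
    exact pass2 x hx
  -- (9) nondegeneracy
  · intro x hx
    have hgenW2 : ∀ z ∈ genSet, z ∈ closure
        ((Submodule.span ℂ {z : 𝓗 | ∃ f y, y ∈ 𝓗₁ ∧ z = ν f y} : Submodule ℂ 𝓗) :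
          Set 𝓗) := by
      rintro z ⟨g, y, hg, rfl⟩
      rw [Metric.mem_closure_iff]
      intro ε hε
      have hy1 : (0 : ℝ) < ‖y‖ + 1 := by positivity
      set δ := ε / (‖y‖ + 1) with hδdef
      have hδ : 0 < δ := div_pos hε hy1
      have hg0 : Filter.Tendsto g (Filter.cocompact P) (nhds 0) := zero_at_infty g
      have hev := Metric.tendsto_nhds.mp hg0 δ hδ
      rw [Filter.eventually_iff, Filter.mem_cocompact] at hev
      obtain ⟨K, hKc, hKsub⟩ := hev
      set K₀ := {p : P | δ ≤ ‖g p‖} with hK₀def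
      have hK₀closed : IsClosed K₀ :=
        isClosed_le continuous_const (continuous_norm.comp (map_continuous g))
      have hK₀K : K₀ ⊆ K := by
        intro p hp
        by_contra hpK
        have h2 : dist (g p) 0 < δ := hKsub hpK
        rw [dist_zero_right] at h2
        rw [hK₀def, Set.mem_setOf_eq] at hp
        linarith
      have hK₀comp : IsCompact K₀ := hKc.of_isClosed_subset hK₀closed hK₀K
      have hK₀N : K₀ ⊆ N := by
        intro p hp
        by_contra hpN
        rw [hK₀def, Set.mem_setOf_eq, hg p hpN, norm_zero] at hp
        linarith
      obtain ⟨L, hLcomp, hKL, hLN⟩ := exists_compact_between hK₀comp hNopen hK₀N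
      obtain ⟨χ, hχ1, hχ0, hχcomp, hχ01⟩ := exists_continuous_one_zero_of_isCompact
        hK₀comp (isOpen_interior.isClosed_compl)
        (Set.disjoint_left.mpr fun p hp hpc => hpc (hKL hp))
      have hχsupp : ∀ p : P, χ p ≠ 0 → p ∈ L := by
        intro p hp
        by_contra hpL
        exact hp (hχ0 (fun hmem => hpL (interior_subset hmem)))
      have hbd : ∀ p : P, ‖χ p • g p‖ ≤ ‖g p‖ := by
        intro p
        rw [norm_smul]
        have h01 := hχ01 p
        have hn : ‖χ p‖ ≤ 1 := by
          rw [Real.norm_eq_abs, abs_le]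
          exact ⟨by linarith [h01.1], h01.2⟩
        nlinarith [norm_nonneg (g p)]
      let g' : C₀(P, C) :=
        { toFun := fun p => χ p • g p
          continuous_toFun := (map_continuous χ).smul (map_continuous g)
          zero_at_infty' := by
            refine squeeze_zero_norm hbd ?_
            exact tendsto_zero_iff_norm_tendsto_zero.mp hg0 }
      have hg'I : ∀ p ∉ N, g' p = 0 := by
        intro p hp
        show χ p • g p = 0
        rw [hg p hp, smul_zero]
      have hsubnorm : ‖g - g'‖ ≤ δ := by
        refine auxNormLe _ _ hδ.le fun p => ?_
        have happly : (g - g') p = g p - χ p • g p := by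
          rw [ZeroAtInftyContinuousMap.sub_apply]; rfl
        rw [happly]
        by_cases hp : p ∈ K₀
        · have h1 : χ p = 1 := hχ1 hp
          rw [h1, one_smul, sub_self, norm_zero]
          exact hδ.le
        · have h2 : ‖g p‖ ≤ δ := by
            rw [hK₀def, Set.mem_setOf_eq, not_le] at hp
            exact hp.le
          have h3 : g p - χ p • g p = (1 - χ p) • g p := by
            rw [sub_smul, one_smul]
          rw [h3, norm_smul]
          have h01 := hχ01 p
          have h4 : ‖(1 : ℝ) - χ p‖ ≤ 1 := by
            rw [Real.norm_eq_abs, abs_le]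
            exact ⟨by linarith [h01.2], by linarith [h01.1]⟩
          nlinarith [norm_nonneg (g p)]
      have hLB : IsCompact {q : {p : P // p ∈ N} | (q : P) ∈ L} := by
        rw [Topology.IsEmbedding.subtypeVal.isCompact_iff]
        have himg : Subtype.val '' {q : {p : P // p ∈ N} | (q : P) ∈ L} = L := by
          apply Set.Subset.antisymm
          · rintro p ⟨q, hq, rfl⟩; exact hq
          · intro p hp
            exact ⟨⟨p, hLN hp⟩, hp, rfl⟩
        rw [himg]
        exact hLcomp
      set KH := (fun q : {p : P // p ∈ N} => (e q).2) '' {q | (q : P) ∈ L} with hKHdef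
      have hKHcomp : IsCompact KH := hLB.image (continuous_snd.comp e.continuous)
      obtain ⟨fH, hfH1, -, hfHcomp, -⟩ := exists_continuous_one_zero_of_isCompact
        hKHcomp isClosed_empty (Set.disjoint_right.mpr fun r hr => hr.elim)
      let fC : C₀(H, ℂ) :=
        { toFun := fun r => (fH r : ℂ)
          continuous_toFun := Complex.continuous_ofReal.comp (map_continuous fH)
          zero_at_infty' := by
            have hev2 : ∀ᶠ r in Filter.cocompact H, ((fH r : ℝ) : ℂ) = 0 := by
              rw [Filter.eventually_iff, Filter.mem_cocompact]
              refine ⟨tsupport fH, hfHcomp, fun r hr => ?_⟩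
              rw [Set.mem_setOf_eq, image_eq_zero_of_notMem_tsupport hr]
              norm_num
            exact tendsto_const_nhds.congr' (by filter_upwards [hev2] with r hr using hr.symm) }
      have hιfix : ι fC g' = g' := by
        ext p
        by_cases hp : p ∈ N
        · rw [hιval fC g' hg'I p hp]
          by_cases hzero : g' p = 0
          · rw [hzero, smul_zero]
          · have hχp : χ p ≠ 0 := by
              intro h0
              apply hzero
              show χ p • g p = 0
              rw [h0, zero_smul]
            have hpL : p ∈ L := hχsupp p hχp
            have hmem : (e ⟨p, hp⟩).2 ∈ KH := ⟨⟨p, hp⟩, hpL, rfl⟩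
            have hone : fC ((e ⟨p, hp⟩).2) = 1 := by
              show ((fH ((e ⟨p, hp⟩).2) : ℝ) : ℂ) = 1
              have := hfH1 hmem
              rw [this]
              norm_num
            rw [hone, one_smul]
        · rw [hιI fC g' hg'I p hp, hg'I p hp]
      refine ⟨μ g' y, ?_, ?_⟩
      · refine Submodule.subset_span ⟨fC, μ g' y, ?_, ?_⟩
        · exact hgenW ⟨g', y, hg'I, rfl⟩
        · rw [EXT fC g' y hg'I, hιfix]
      · rw [dist_eq_norm, ← ContinuousLinearMap.sub_apply, ← hμsub]
        calc ‖μ (g - g') y‖ ≤ ‖μ (g - g')‖ * ‖y‖ := (μ (g - g')).le_opNorm y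
          _ ≤ ‖g - g'‖ * ‖y‖ := mul_le_mul_of_nonneg_right (hcontr _) (norm_nonneg _)
          _ ≤ δ * ‖y‖ := mul_le_mul_of_nonneg_right hsubnorm (norm_nonneg _)
          _ < δ * (‖y‖ + 1) := by nlinarith
          _ = ε := by rw [hδdef]; field_simp
    have hspanle : (Submodule.span ℂ genSet).topologicalClosure ≤
        (Submodule.span ℂ {z : 𝓗 | ∃ f y, y ∈ 𝓗₁ ∧ z = ν f y}).topologicalClosure := by
      refine Submodule.topologicalClosure_minimal _ ?_
        (Submodule.isClosed_topologicalClosure _)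
      rw [Submodule.span_le]
      intro z hz
      have h2 := hgenW2 z hz
      rwa [← Submodule.topologicalClosure_coe] at h2
    have hmem : x ∈ (Submodule.span ℂ
        {z : 𝓗 | ∃ f y, y ∈ 𝓗₁ ∧ z = ν f y}).topologicalClosure := hspanle hx
    rw [← Submodule.topologicalClosure_coe]
    exact hmem
  -- (10) covariance
  · intro s f f' hf' x hx
    have hUs : ∀ z, ((U s).toLinearIsometry.toContinuousLinearMap) z = U s z :=
      fun z => rfl
    have hAB : ∀ g y, (∀ p ∉ N, g p = 0) →
        (((U s).toLinearIsometry.toContinuousLinearMap).comp (ν f)) (μ g y)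
          = ((ν f').comp ((U s).toLinearIsometry.toContinuousLinearMap)) (μ g y) := by
      intro g y hg
      show U s (ν f (μ g y)) = ν f' (U s (μ g y))
      rw [EXT f g y hg, hcov s (ι f g) y, hcov s g y,
        EXT f' (α s g) (U s y) (hIα s g hg), Lcov s f f' g hg hf']
    exact AGREE _ _ hAB x hx
  -- (11) commutation
  · intro f g x hx
    have hAB : ∀ g₀ y, (∀ p ∉ N, g₀ p = 0) →
        ((ν f).comp (μ g)) (μ g₀ y) = ((μ g).comp (ν f)) (μ g₀ y) := by
      intro g₀ y hg₀
      show ν f (μ g (μ g₀ y)) = μ g (ν f (μ g₀ y))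
      rw [← hmul' g g₀ y, EXT f (g * g₀) y (hImul_l g g₀ hg₀), EXT f g₀ y hg₀,
        ← Lmull f g g₀ hg₀, hmul']
    exact AGREE _ _ hAB x hx
end

section
/- Let A be a C_0(P)-algebra with structure map ι_A : C_0(P) → ZM(A) nondegenerate and injective, inducing q_A : Prim A → P. Let τ : H → Aut A satisfy τ_s(f·a) = lt_s(f)·τ_s(a). Let ν be a nondegenerate representation of C_0(P,A) with kernel I_Δ := {b ∈ C_0(P,A) : b(q_A(I)) ∈ I for all I ∈ Prim A}. Then the restriction of the extension ν̄ (to the multiplier algebra) to the induced algebra Ind(A,τ) ⊆ C_b(P,A) ⊆ M(C_0(P,A)) has kernel exactly I(τ) := {b ∈ Ind(A,τ) : b(q_A(I)) ∈ I for all I ∈ Prim A}. -/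
open ZeroAtInfty BoundedContinuousFunction

/-- For a `C₀(P)`-algebra `A` (structure map `ιA` into the centre of
`M(A)`, inducing `q_A : Prim A → P`), an equivariant action `τ` of `H`, and a
nondegenerate representation `ν` of `C₀(P,A)` with kernel
`I_Δ = {c : c(q_A(I)) ∈ I ∀ I ∈ Prim A}`, the restriction of the multiplier extension
`ν̄` to `Ind(A,τ) ⊆ C_b(P,A)` has kernel exactly
`I(τ) = {b ∈ Ind(A,τ) : b(q_A(I)) ∈ I ∀ I ∈ Prim A}`.  (Here `ν̄(b) = 0` is expressed
by `ν(b·c) = 0` for all `c ∈ C₀(P,A)`, `Prim A` is abstracted as an index type `Λ` of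
primitive — in particular closed, two-sided, prime-like — ideals `memI · l`.) -/
theorem statement11
    (H P : Type*) [Group H] [TopologicalSpace H] [IsTopologicalGroup H]
    [TopologicalSpace P] [T2Space P] [LocallyCompactSpace P]
    [MulAction H P] [ContinuousSMul H P]
    -- the orbit space H\P with its quotient map
    (Q : Type*) [TopologicalSpace Q] (πQ : P → Q) (hπQ : Topology.IsQuotientMap πQ)
    (hπQfib : ∀ p p', πQ p = πQ p' ↔ ∃ s : H, s • p = p')
    -- a C*-algebra A
    (A : Type*) [NonUnitalNormedRing A] [StarRing A] [CStarRing A] [NormedSpace ℂ A]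
    [IsScalarTower ℂ A A] [SMulCommClass ℂ A A] [StarModule ℂ A] [NormedStarGroup A]
    [CompleteSpace A]
    -- the C₀(P)-algebra structure map ιA : C₀(P) → ZM(A), nondegenerate and injective
    (ιA : C₀(P, ℂ) → A → A)
    (hιadd : ∀ f a a', ιA f (a + a') = ιA f a + ιA f a')
    (hιadd' : ∀ f f' a, ιA (f + f') a = ιA f a + ιA f' a)
    (hιmul : ∀ f f' a, ιA (f * f') a = ιA f (ιA f' a))
    (hιcentral : ∀ f a b, ιA f a * b = ιA f (a * b) ∧ ιA f (a * b) = a * ιA f b)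
    (hιnd : ∀ a : A, a ∈ closure (Submodule.span ℂ {x : A | ∃ f b, x = ιA f b} : Set A))
    (hιinj : ∀ f, (∀ a, ιA f a = 0) → f = 0)
    -- Prim A, abstracted: an index type Λ of primitive ideals memI · l
    (Λ : Type*) (memI : A → Λ → Prop)
    (hI0 : ∀ l, memI 0 l)
    (hIadd : ∀ l a a', memI a l → memI a' l → memI (a + a') l)
    (hIsmul : ∀ l (c : ℂ) a, memI a l → memI (c • a) l)
    (hImull : ∀ l a b, memI a l → memI (b * a) l)
    (hImulr : ∀ l a b, memI a l → memI (a * b) l)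
    (hIclosed : ∀ l, IsClosed {a : A | memI a l})
    (hIprime : ∀ l b, (∀ a : A, memI (b * a) l) → memI b l)
    (hIsep : ∀ a : A, (∀ l, memI a l) → a = 0)
    -- the induced map q_A : Prim A → P
    (qA : Λ → P)
    (hqA : ∀ l (p : P), qA l = p ↔ ∀ (f : C₀(P, ℂ)) (a : A), f p = 0 → memI (ιA f a) l)
    -- the action τ of H on A, compatible with the C₀(P)-structure
    (τ : H → A ≃⋆ₐ[ℂ] A) (hτ1 : ∀ a, τ 1 a = a)
    (hτmul : ∀ s s' a, τ (s * s') a = τ s (τ s' a))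
    (hτcont : ∀ a, Continuous fun s => τ s a)
    (hττι : ∀ (s : H) (f : C₀(P, ℂ)) (f' : C₀(P, ℂ)) (a : A),
      (∀ p, f' p = f (s⁻¹ • p)) → τ s (ιA f a) = ιA f' (τ s a))
    -- evaluation of C₀(P,A) at a point is surjective onto A
    (hev : ∀ (p : P) (a : A), ∃ c : C₀(P, A), c p = a)
    -- a Hilbert space 𝓗 and a nondegenerate representation ν of C₀(P,A) with ker ν = I_Δ
    (𝓗 : Type*) [NormedAddCommGroup 𝓗] [InnerProductSpace ℂ 𝓗] [CompleteSpace 𝓗]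
    (ν : C₀(P, A) → 𝓗 →L[ℂ] 𝓗)
    (hνadd : ∀ c c', ν (c + c') = ν c + ν c')
    (hνsmul : ∀ (z : ℂ) c, ν (z • c) = z • ν c)
    (hνmul : ∀ c c', ν (c * c') = (ν c).comp (ν c'))
    (hνstar : ∀ c (x y : 𝓗), (inner ℂ (ν (star c) x) y : ℂ) = inner ℂ x (ν c y))
    (hνnd : ∀ x : 𝓗, x ∈ closure (Submodule.span ℂ {z : 𝓗 | ∃ c y, z = ν c y} : Set 𝓗))
    (hνker : ∀ c : C₀(P, A), ν c = 0 ↔ ∀ l, memI (c (qA l)) l) :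
    -- conclusion: for b in the induced algebra Ind(A,τ) ⊆ C_b(P,A),
    -- ν̄(b) = 0  (i.e. ν(b·c) = 0 for all c)  iff  b ∈ I(τ)
    ∀ b : P →ᵇ A,
      (∀ (s : H) (p : P), b (s • p) = τ s (b p)) →
      (∀ ε > (0:ℝ), IsCompact {x : Q | ∃ p, πQ p = x ∧ ε ≤ ‖b p‖}) →
      ((∀ c d : C₀(P, A), (∀ p, d p = b p * c p) → ν d = 0) ↔
        ∀ l, memI (b (qA l)) l) := by
  intro b hequiv hcpt
  constructor
  · intro hν l
    apply hIprime
    intro a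
    obtain ⟨c, hc⟩ := hev (qA l) a
    have hd0 : Filter.Tendsto (fun p => b p * c p) (Filter.cocompact P) (nhds 0) := by
      rw [tendsto_zero_iff_norm_tendsto_zero]
      apply squeeze_zero (fun p => norm_nonneg _) (fun p => (norm_mul_le _ _).trans
        (mul_le_mul_of_nonneg_right (b.norm_coe_le_norm p) (norm_nonneg _)))
      have := c.zero_at_infty'
      rw [tendsto_zero_iff_norm_tendsto_zero] at this
      simpa using this.const_mul ‖b‖
    let d : C₀(P, A) :=
      ⟨⟨fun p => b p * c p, b.continuous.mul (map_continuous c)⟩, hd0⟩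
    have hd : ν d = 0 := hν c d fun p => rfl
    have := (hνker d).mp hd l
    simpa [d, hc] using this
  · intro hmem c d hd
    rw [hνker]
    intro l
    rw [hd]
    exact hImulr l _ _ (hmem l)
end
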